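/- arXiv:1611.10001 — 7 statements merged into one kernel-verified Lean document; each statement's English description precedes it below -/
import Mathlib

section
/- For every compatible pair (u, v) and every real number a, setting m(a) = inf_{k ≥ 1} (a − 1/λ_k)^2 and M(a) = sup_{k ≥ 1} (a − 1/λ_k)^2 (this supremum is finite since 0 < 1/λ_k ≤ 1/λ_1 for all k ≥ 1), one has (m(a) − a^2)·‖v‖^2 ≤ ‖u − P_0 u‖^2 − 2a·Re⟪u, v⟫ ≤ (M(a) − a^2)·‖v‖^2. -/
/-- Abstract form of Theorem 3.1 of Li–Lin–Son.
`H` is a complex Hilbert space, `E k` a family of mutually orthogonal closed subspaces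
with dense algebraic span, `P k` the orthogonal projection onto `E k`, and
`lam k` (for `k ≥ 1`) a strictly increasing sequence of positive reals tending to `∞`.
For every compatible pair `(u, v)` (i.e. `P 0 v = 0` and `P k v = lam k • P k u` for `k ≥ 1`)
and every real `a`, with `m a = ⨅_{k ≥ 1} (a - 1/lam k)^2` and
`M a = ⨆_{k ≥ 1} (a - 1/lam k)^2`, one has
`(m a - a^2)‖v‖² ≤ ‖u - P 0 u‖² - 2a Re⟪u, v⟫ ≤ (M a - a^2)‖v‖²`. -/
theorem firstEigenvalue_abstract_two_sided_estimate
    {H : Type*} [NormedAddCommGroup H] [InnerProductSpace ℂ H] [CompleteSpace H]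
    (E : ℕ → Submodule ℂ H)
    (hEclosed : ∀ k, IsClosed (E k : Set H))
    (hEorth : ∀ j k, j ≠ k → ∀ x ∈ E j, ∀ y ∈ E k, (inner ℂ x y : ℂ) = 0)
    (hEdense : (⨆ k, E k : Submodule ℂ H).topologicalClosure = ⊤)
    (P : ℕ → H →L[ℂ] H)
    (hPmem : ∀ k x, P k x ∈ E k)
    (hPorth : ∀ k x, x - P k x ∈ (E k)ᗮ)
    (lam : ℕ → ℝ)
    (hlampos : ∀ k, 1 ≤ k → 0 < lam k)
    (hlammono : ∀ j k, 1 ≤ j → j < k → lam j < lam k)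
    (hlamtop : Filter.Tendsto lam Filter.atTop Filter.atTop)
    (u v : H)
    (hcompat0 : P 0 v = 0)
    (hcompat : ∀ k, 1 ≤ k → P k v = ((lam k : ℂ)) • P k u)
    (a : ℝ) :
    ((⨅ k : {k : ℕ // 1 ≤ k}, (a - 1 / lam k)^2) - a^2) * ‖v‖^2
        ≤ ‖u - P 0 u‖^2 - 2 * a * (inner ℂ u v : ℂ).re
      ∧ ‖u - P 0 u‖^2 - 2 * a * (inner ℂ u v : ℂ).re
        ≤ ((⨆ k : {k : ℕ // 1 ≤ k}, (a - 1 / lam k)^2) - a^2) * ‖v‖^2 := by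
  classical
  haveI : ∀ k, CompleteSpace (E k) := fun k => (hEclosed k).completeSpace_coe
  -- E i ⊆ (E k)ᗮ for i ≠ k
  have hEsub : ∀ i k, i ≠ k → ∀ z ∈ E i, z ∈ (E k)ᗮ := fun i k hik z hz =>
    (Submodule.mem_orthogonal _ _).mpr fun t ht => hEorth k i (Ne.symm hik) t ht z hz
  -- P k fixes E k
  have hPid : ∀ k, ∀ y ∈ E k, P k y = y := by
    intro k y hy
    have h1 : y - P k y ∈ E k := Submodule.sub_mem _ hy (hPmem k y)
    have h2 : (inner ℂ (y - P k y) (y - P k y) : ℂ) = 0 :=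
      (Submodule.mem_orthogonal _ _).mp (hPorth k y) _ h1
    have h3 : y - P k y = 0 := inner_self_eq_zero.mp h2
    exact (sub_eq_zero.mp h3).symm
  -- P k kills (E k)ᗮ
  have hPzero : ∀ k, ∀ y ∈ (E k)ᗮ, P k y = 0 := by
    intro k y hy
    have h1 : (inner ℂ (P k y) (P k y) : ℂ) =
        inner ℂ (P k y) y - inner ℂ (P k y) (y - P k y) := by
      rw [inner_sub_right]; ring
    have h2 : (inner ℂ (P k y) y : ℂ) = 0 :=
      (Submodule.mem_orthogonal _ _).mp hy _ (hPmem k y)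
    have h3 : (inner ℂ (P k y) (y - P k y) : ℂ) = 0 :=
      (Submodule.mem_orthogonal _ _).mp (hPorth k y) _ (hPmem k y)
    rw [h2, h3, sub_zero] at h1
    exact inner_self_eq_zero.mp h1
  -- ⟪x, P k y⟫ = ⟪P k x, P k y⟫
  have hinner_proj : ∀ k (x y : H), (inner ℂ x (P k y) : ℂ) = inner ℂ (P k x) (P k y) := by
    intro k x y
    have h3 : (inner ℂ (P k y) (x - P k x) : ℂ) = 0 :=
      (Submodule.mem_orthogonal _ _).mp (hPorth k x) _ (hPmem k y)
    have h3' : (inner ℂ (x - P k x) (P k y) : ℂ) = 0 := by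
      rw [← inner_conj_symm, h3, map_zero]
    have : (inner ℂ x (P k y) : ℂ) = inner ℂ (P k x) (P k y) + inner ℂ (x - P k x) (P k y) := by
      rw [← inner_add_left]; congr 1; abel
    rw [this, h3', add_zero]
  -- the orthogonal family / Hilbert sum
  have hfam : OrthogonalFamily ℂ (fun k => E k) (fun k => (E k).subtypeₗᵢ) :=
    fun i j hij x y => hEorth i j hij x x.2 y y.2
  have hHS : IsHilbertSum ℂ (fun k => E k) (fun k => (E k).subtypeₗᵢ) :=
    IsHilbertSum.mkInternal _ hfam (by rw [hEdense])
  -- key: HasSum (fun k => P k x) x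
  have key : ∀ x : H, HasSum (fun k => P k x) x := by
    intro x
    have hs := hHS.hasSum_linearIsometryEquiv_symm (hHS.linearIsometryEquiv x)
    rw [LinearIsometryEquiv.symm_apply_apply] at hs
    set w : ∀ k, E k := fun k => hHS.linearIsometryEquiv x k with hw
    have hterm : ∀ k, P k x = (w k : H) := by
      intro k
      have hk := (P k).hasSum hs
      have heq : (fun i => P k ((E i).subtypeₗᵢ (w i))) = fun i => if i = k then (w k : H) else 0 := by
        funext i
        by_cases h : i = k
        · subst h
          show P i ((w i : H)) = _
          rw [hPid i _ (w i).2, if_pos rfl]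
        · show P k ((w i : H)) = _
          rw [hPzero k _ (hEsub i k h _ (w i).2), if_neg h]
      rw [heq] at hk
      exact hk.unique (hasSum_ite_eq k _)
    have : (fun k => P k x) = fun k => (E k).subtypeₗᵢ (w k) := funext fun k => hterm k
    rw [this]
    exact hs
  -- inner ℂ product sums
  have keyInner : ∀ x y : H, HasSum (fun k => (inner ℂ y (P k x) : ℂ)) (inner ℂ y x : ℂ) :=
    fun x y => (innerSL ℂ y).hasSum (key x)
  -- the three series
  set wu : H := u - P 0 u with hwu
  have hPwu : ∀ k, 1 ≤ k → P k wu = P k u := by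
    intro k hk
    have : P k (P 0 u) = 0 := hPzero k _ (hEsub 0 k (by omega) _ (hPmem 0 u))
    simp [hwu, map_sub, this]
  have hPwu0 : P 0 wu = 0 := by
    simp [hwu, map_sub, hPid 0 _ (hPmem 0 u)]
  -- series for ‖wu‖²
  have hre : ∀ x : H, (inner ℂ x x : ℂ).re = ‖x‖^2 := fun x => inner_self_eq_norm_sq (𝕜 := ℂ) x
  have hA : HasSum (fun k => (inner ℂ wu (P k wu) : ℂ).re) (‖wu‖^2) := by
    have h := Complex.reCLM.hasSum (keyInner wu wu)
    rwa [show (Complex.reCLM (inner ℂ wu wu : ℂ)) = ‖wu‖^2 from hre wu] at h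
  have hAterm : ∀ k, (inner ℂ wu (P k wu) : ℂ).re =
      if k = 0 then 0 else ‖P k u‖^2 := by
    intro k
    by_cases h : k = 0
    · subst h; simp [hPwu0]
    · have hk : 1 ≤ k := by omega
      rw [hinner_proj, hPwu k hk, if_neg h]
      exact hre _
  -- series for Re⟪u, v⟫
  have hB : HasSum (fun k => (inner ℂ u (P k v) : ℂ).re) ((inner ℂ u v : ℂ).re) :=
    Complex.reCLM.hasSum (keyInner v u)
  have hBterm : ∀ k, (inner ℂ u (P k v) : ℂ).re =
      if k = 0 then 0 else lam k * ‖P k u‖^2 := by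
    intro k
    by_cases h : k = 0
    · subst h; simp [hcompat0]
    · have hk : 1 ≤ k := by omega
      rw [hinner_proj, hcompat k hk, inner_smul_right, if_neg h,
        Complex.re_ofReal_mul, hre]
  -- series for ‖v‖²
  have hC : HasSum (fun k => (inner ℂ v (P k v) : ℂ).re) (‖v‖^2) := by
    have h := Complex.reCLM.hasSum (keyInner v v)
    rwa [show (Complex.reCLM (inner ℂ v v : ℂ)) = ‖v‖^2 from hre v] at h
  have hCterm : ∀ k, (inner ℂ v (P k v) : ℂ).re =
      if k = 0 then 0 else (lam k)^2 * ‖P k u‖^2 := by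
    intro k
    by_cases h : k = 0
    · subst h; simp [hcompat0]
    · have hk : 1 ≤ k := by omega
      rw [hinner_proj, if_neg h]
      calc (inner ℂ (P k v) (P k v) : ℂ).re = ‖P k v‖^2 := hre _
        _ = ‖(lam k : ℂ)‖^2 * ‖P k u‖^2 := by rw [hcompat k hk, norm_smul, mul_pow]
        _ = (lam k)^2 * ‖P k u‖^2 := by
            rw [Complex.norm_real, Real.norm_eq_abs, sq_abs]
  -- combined series
  set t : ℕ → ℝ := fun k => if k = 0 then 0 else (1 - 2*a*lam k) * ‖P k u‖^2 with ht
  set s : ℕ → ℝ := fun k => if k = 0 then 0 else (lam k)^2 * ‖P k u‖^2 with hs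
  have hT : HasSum t (‖wu‖^2 - 2 * a * (inner ℂ u v : ℂ).re) := by
    have h := hA.sub (hB.mul_left (2*a))
    have hfun : t = fun k => (inner ℂ wu (P k wu) : ℂ).re - 2*a*(inner ℂ u (P k v) : ℂ).re := by
      funext k
      rw [ht, hAterm, hBterm]
      by_cases h : k = 0
      · simp [h]
      · simp only [if_neg h]; ring
    rw [hfun]
    exact h
  have hS : HasSum s (‖v‖^2) := by
    have hfun : (fun k => (inner ℂ v (P k v) : ℂ).re) = s := funext fun k => hCterm k
    rwa [hfun] at hC
  -- bounded above/below
  haveI : Nonempty {k : ℕ // 1 ≤ k} := ⟨⟨1, le_refl 1⟩⟩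
  have hlam1 : ∀ k : ℕ, 1 ≤ k → lam 1 ≤ lam k := by
    intro k hk
    rcases eq_or_lt_of_le hk with h | h
    · rw [← h]
    · exact (hlammono 1 k le_rfl h).le
  have hbddA : BddAbove (Set.range fun k : {k : ℕ // 1 ≤ k} => (a - 1 / lam k)^2) := by
    refine ⟨(|a| + 1/lam 1)^2, ?_⟩
    rintro x ⟨⟨k, hk⟩, rfl⟩
    have h1 : 0 < lam 1 := hlampos 1 le_rfl
    have h2 : 0 < lam k := hlampos k hk
    have h3 : 1/lam k ≤ 1/lam 1 := by
      apply one_div_le_one_div_of_le h1 (hlam1 k hk)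
    have h4 : |a - 1/lam k| ≤ |a| + 1/lam 1 := by
      calc |a - 1/lam k| ≤ |a| + |1/lam k| := abs_sub _ _
        _ ≤ |a| + 1/lam 1 := by
            rw [abs_of_pos (by positivity : (0:ℝ) < 1/lam k)]; linarith
    calc (a - 1/lam k)^2 = |a - 1/lam k|^2 := (sq_abs _).symm
      _ ≤ (|a| + 1/lam 1)^2 := by
          apply pow_le_pow_left₀ (abs_nonneg _) h4
  have hbddB : BddBelow (Set.range fun k : {k : ℕ // 1 ≤ k} => (a - 1 / lam k)^2) :=
    ⟨0, by rintro x ⟨k, rfl⟩; exact sq_nonneg _⟩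
  -- termwise inequalities
  set m : ℝ := ⨅ k : {k : ℕ // 1 ≤ k}, (a - 1 / lam k)^2 with hm
  set M : ℝ := ⨆ k : {k : ℕ // 1 ≤ k}, (a - 1 / lam k)^2 with hM
  have hts : ∀ k, t k = ((a - 1/lam k)^2 - a^2) * s k := by
    intro k
    by_cases h : k = 0
    · simp [ht, hs, h]
    · have hk : 1 ≤ k := by omega
      have hL : lam k ≠ 0 := (hlampos k hk).ne'
      simp only [ht, hs, if_neg h]
      field_simp
      ring
  have hlow : ∀ k, (m - a^2) * s k ≤ t k := by
    intro k
    by_cases h : k = 0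
    · simp [ht, hs, h]
    · rw [hts]
      have hs0 : 0 ≤ s k := by
        simp only [hs]; split <;> positivity
      apply mul_le_mul_of_nonneg_right _ hs0
      have hle : m ≤ (a - 1/lam k)^2 := ciInf_le hbddB ⟨k, by omega⟩
      linarith
  have hhigh : ∀ k, t k ≤ (M - a^2) * s k := by
    intro k
    by_cases h : k = 0
    · simp [ht, hs, h]
    · rw [hts]
      have hs0 : 0 ≤ s k := by
        simp only [hs]; split <;> positivity
      apply mul_le_mul_of_nonneg_right _ hs0
      have hle : (a - 1/lam k)^2 ≤ M := le_ciSup hbddA ⟨k, by omega⟩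
      linarith
  constructor
  · exact hasSum_le hlow (hS.mul_left (m - a^2)) hT
  · exact hasSum_le hhigh hT (hS.mul_left (M - a^2))
end

section
/- Assume E_1 ≠ {0}. Then λ_1 = inf { ‖v‖^2 : (u, v) is a compatible pair with Re⟪u, v⟫ = 1 }. (In particular the set on the right is nonempty and bounded below by λ_1, and the infimum is attained at a suitably normalized element of E_1.) -/
/-- Abstract form of Corollary 3.2 (first part) of Li–Lin–Son:
with the setup of mutually orthogonal closed subspaces `E k` with dense span,
orthogonal projections `P k`, and positive eigenvalues `lam k` (`k ≥ 1`) strictly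
increasing to infinity, if `E 1 ≠ 0` then
`lam 1 = inf { ‖v‖² : (u, v) compatible, Re⟪u, v⟫ = 1 }`; moreover the set is
nonempty, bounded below by `lam 1`, and the infimum is attained. -/
theorem firstEigenvalue_variational_sup_norm_sq
    {H : Type*} [NormedAddCommGroup H] [InnerProductSpace ℂ H] [CompleteSpace H]
    (E : ℕ → Submodule ℂ H)
    (hEclosed : ∀ k, IsClosed (E k : Set H))
    (hEorth : ∀ j k, j ≠ k → ∀ x ∈ E j, ∀ y ∈ E k, (inner ℂ x y : ℂ) = 0)
    (hEdense : (⨆ k, E k : Submodule ℂ H).topologicalClosure = ⊤)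
    (P : ℕ → H →L[ℂ] H)
    (hPmem : ∀ k x, P k x ∈ E k)
    (hPorth : ∀ k x, x - P k x ∈ (E k)ᗮ)
    (lam : ℕ → ℝ)
    (hlampos : ∀ k, 1 ≤ k → 0 < lam k)
    (hlammono : ∀ j k, 1 ≤ j → j < k → lam j < lam k)
    (hlamtop : Filter.Tendsto lam Filter.atTop Filter.atTop)
    (hE1 : E 1 ≠ ⊥) :
    (({x : ℝ | ∃ u v : H, (P 0 v = 0 ∧ ∀ k, 1 ≤ k → P k v = ((lam k : ℂ)) • P k u) ∧
        (inner ℂ u v : ℂ).re = 1 ∧ x = ‖v‖^2}).Nonempty)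
    ∧ (∀ x ∈ {x : ℝ | ∃ u v : H, (P 0 v = 0 ∧ ∀ k, 1 ≤ k → P k v = ((lam k : ℂ)) • P k u) ∧
        (inner ℂ u v : ℂ).re = 1 ∧ x = ‖v‖^2}, lam 1 ≤ x)
    ∧ lam 1 = sInf {x : ℝ | ∃ u v : H, (P 0 v = 0 ∧ ∀ k, 1 ≤ k → P k v = ((lam k : ℂ)) • P k u) ∧
        (inner ℂ u v : ℂ).re = 1 ∧ x = ‖v‖^2}
    ∧ lam 1 ∈ {x : ℝ | ∃ u v : H, (P 0 v = 0 ∧ ∀ k, 1 ≤ k → P k v = ((lam k : ℂ)) • P k u) ∧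
        (inner ℂ u v : ℂ).re = 1 ∧ x = ‖v‖^2} := by
  haveI : ∀ k, CompleteSpace (E k) := fun k => (hEclosed k).completeSpace_coe
  -- P k is the identity on E k
  have hA : ∀ k, ∀ y ∈ E k, P k y = y := by
    intro k y hy
    have h1 : y - P k y ∈ E k := sub_mem hy (hPmem k y)
    have h2 := (Submodule.mem_orthogonal' _ _).mp (hPorth k y) _ h1
    have : y - P k y = 0 := inner_self_eq_zero.mp h2
    linear_combination (norm := module) -this
  -- P k vanishes on E j for j ≠ k
  have hB : ∀ j k, j ≠ k → ∀ y ∈ E j, P k y = 0 := by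
    intro j k hjk y hy
    have h1 : (inner ℂ y (P k y) : ℂ) = 0 := hEorth j k hjk y hy _ (hPmem k y)
    have h2 : (inner ℂ (y - P k y) (P k y) : ℂ) = 0 :=
      (Submodule.mem_orthogonal' _ _).mp (hPorth k y) _ (hPmem k y)
    have : (inner ℂ (P k y) (P k y) : ℂ) = 0 := by
      rw [inner_sub_left, h1] at h2; linear_combination -h2
    exact inner_self_eq_zero.mp this
  -- the Hilbert sum decomposition
  have hfam : OrthogonalFamily ℂ (fun k => E k) (fun k => (E k).subtypeₗᵢ) := by
    intro j k hjk x y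
    exact hEorth j k hjk x x.2 y y.2
  have hsum : IsHilbertSum ℂ (fun k => E k) (fun k => (E k).subtypeₗᵢ) :=
    IsHilbertSum.mkInternal _ hfam (le_of_eq hEdense.symm)
  have hC : ∀ x : H, HasSum (fun k => P k x) x := by
    intro x
    set w := hsum.linearIsometryEquiv x with hw
    have hx : HasSum (fun k => ((w k : E k) : H)) x := by
      have := hsum.hasSum_linearIsometryEquiv_symm w
      rw [hw, LinearIsometryEquiv.symm_apply_apply] at this; exact this
    have hwk : ∀ k, ((w k : E k) : H) = P k x := by
      intro k
      have h1 : HasSum (fun i => P k ((w i : E i) : H)) (P k x) := (P k).hasSum hx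
      have h2 : (fun i => P k ((w i : E i) : H))
          = fun i => if i = k then ((w k : E k) : H) else 0 := by
        funext i
        by_cases hik : i = k
        · subst hik; simp [hA i _ (w i).2]
        · simp [hik, hB i k hik _ (w i).2]
      rw [h2] at h1
      exact ((hasSum_ite_eq k _).unique h1)
    simpa [hwk] using hx
  -- inner products decompose
  have hD : ∀ (u v : H) (k : ℕ), (inner ℂ (P k u) (P k v) : ℂ) = inner ℂ u (P k v) := by
    intro u v k
    have h2 : (inner ℂ (u - P k u) (P k v) : ℂ) = 0 :=
      (Submodule.mem_orthogonal' _ _).mp (hPorth k u) _ (hPmem k v)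
    rw [inner_sub_left] at h2
    linear_combination -h2
  have hSumInner : ∀ u v : H, HasSum (fun k => (inner ℂ (P k u) (P k v) : ℂ)) (inner ℂ u v) := by
    intro u v
    have := (innerSL ℂ u).hasSum (hC v)
    simpa only [innerSL_apply_apply, hD] using this
  have hSumRe : ∀ u v : H,
      HasSum (fun k => ((inner ℂ (P k u) (P k v) : ℂ)).re) ((inner ℂ u v : ℂ).re) := by
    intro u v
    exact Complex.reCLM.hasSum (hSumInner u v)
  have hre_self : ∀ x : H, ((inner ℂ x x : ℂ)).re = ‖x‖ ^ 2 := by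
    intro x
    rw [@inner_self_eq_norm_sq_to_K ℂ]
    norm_cast
  have hNormSq : ∀ v : H, HasSum (fun k => ‖P k v‖ ^ 2) (‖v‖ ^ 2) := by
    intro v
    simpa only [hre_self] using hSumRe v v
  have hl1 : 0 < lam 1 := hlampos 1 le_rfl
  have hlam_le : ∀ k, 1 ≤ k → lam 1 ≤ lam k := by
    intro k hk
    rcases eq_or_lt_of_le hk with h | h
    · rw [← h]
    · exact (hlammono 1 k le_rfl h).le
  -- lower bound
  have hlb : ∀ x ∈ {x : ℝ | ∃ u v : H,
      (P 0 v = 0 ∧ ∀ k, 1 ≤ k → P k v = ((lam k : ℂ)) • P k u) ∧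
      (inner ℂ u v : ℂ).re = 1 ∧ x = ‖v‖^2}, lam 1 ≤ x := by
    rintro x ⟨u, v, ⟨h0, hk⟩, hre, rfl⟩
    have h1 : HasSum (fun k => lam 1 * ((inner ℂ (P k u) (P k v) : ℂ)).re) (lam 1 * 1) :=
      (hre ▸ hSumRe u v).mul_left (lam 1)
    have h2 := hNormSq v
    have hle : ∀ k, lam 1 * ((inner ℂ (P k u) (P k v) : ℂ)).re ≤ ‖P k v‖ ^ 2 := by
      intro k
      rcases Nat.eq_zero_or_pos k with hk0 | hk1
      · subst hk0; simp [h0]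
      · rw [hk k hk1, inner_smul_right]
        have hnorm : ‖((lam k : ℂ)) • P k u‖ ^ 2 = lam k ^ 2 * ‖P k u‖ ^ 2 := by
          rw [norm_smul, mul_pow, Complex.norm_real, Real.norm_eq_abs,
            sq_abs]
        rw [hnorm]
        have : (((lam k : ℂ)) * inner ℂ (P k u) (P k u)).re
            = lam k * ‖P k u‖ ^ 2 := by
          rw [Complex.re_ofReal_mul, hre_self]
        rw [this]
        have hk' : lam 1 ≤ lam k := hlam_le k hk1
        have hkpos : 0 < lam k := hlampos k hk1
        nlinarith [sq_nonneg (‖P k u‖), sq_nonneg (‖P k u‖ * (lam k - lam 1))]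
    have := hasSum_le hle h1 h2
    linarith
  -- membership / attainment
  have hmem : lam 1 ∈ {x : ℝ | ∃ u v : H,
      (P 0 v = 0 ∧ ∀ k, 1 ≤ k → P k v = ((lam k : ℂ)) • P k u) ∧
      (inner ℂ u v : ℂ).re = 1 ∧ x = ‖v‖^2} := by
    obtain ⟨e, he, hne⟩ := (Submodule.ne_bot_iff (E 1)).mp hE1
    have hen : (0:ℝ) < ‖e‖ := norm_pos_iff.mpr hne
    set c : ℝ := (‖e‖ * Real.sqrt (lam 1))⁻¹ with hc
    have hsqrt : Real.sqrt (lam 1) ^ 2 = lam 1 := Real.sq_sqrt hl1.le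
    have hsqrtpos : 0 < Real.sqrt (lam 1) := Real.sqrt_pos.mpr hl1
    have hcpos : 0 < c := by positivity
    have hmp : (‖e‖ * Real.sqrt (lam 1)) ^ 2 = ‖e‖ ^ 2 * lam 1 := by
      rw [mul_pow, hsqrt]
    have hc2 : c ^ 2 * (‖e‖ ^ 2 * lam 1) = 1 := by
      rw [hc, ← hmp, inv_pow, inv_mul_cancel₀ (pow_ne_zero 2 (by positivity))]
    refine ⟨(c:ℂ) • e, (lam 1 : ℂ) • ((c:ℂ) • e), ⟨?_, ?_⟩, ?_, ?_⟩
    · simp [map_smul, hB 1 0 one_ne_zero e he]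
    · intro k hk1
      rcases eq_or_lt_of_le hk1 with h | h
      · rw [← h]; simp [map_smul]
      · have hk1' : (1:ℕ) ≠ k := by omega
        simp [map_smul, hB 1 k hk1' e he]
    · rw [inner_smul_left, inner_smul_right, inner_smul_right]
      have : (starRingEnd ℂ) (c:ℂ) = (c:ℂ) := Complex.conj_ofReal c
      rw [this, Complex.re_ofReal_mul, Complex.re_ofReal_mul,
        Complex.re_ofReal_mul, hre_self]
      linear_combination hc2
    · rw [norm_smul, norm_smul, mul_pow, mul_pow, Complex.norm_real,
        Complex.norm_real, Real.norm_eq_abs, Real.norm_eq_abs,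
        sq_abs, sq_abs]
      nlinarith [hc2]
  refine ⟨⟨lam 1, hmem⟩, hlb, ?_, hmem⟩
  exact le_antisymm (le_csInf ⟨lam 1, hmem⟩ hlb)
    (csInf_le ⟨lam 1, hlb⟩ hmem)
end

section
/- Let (u, v) be a compatible pair with Re⟪u, v⟫ = 1 (so in particular v ≠ 0). Then for every k ≥ 1, (‖v‖^2/λ_k − 1)·(‖v‖^2/λ_{k+1} − 1) ≥ 1 − ‖u − P_0 u‖^2 · ‖v‖^2. -/
open scoped ComplexOrder

section Aux

variable {H : Type*} [NormedAddCommGroup H] [InnerProductSpace ℂ H] [CompleteSpace H]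

theorem proj_fix (E : ℕ → Submodule ℂ H) (P : ℕ → H →L[ℂ] H)
    (hPmem : ∀ k x, P k x ∈ E k) (hPorth : ∀ k x, x - P k x ∈ (E k)ᗮ)
    (k : ℕ) {y : H} (hy : y ∈ E k) : P k y = y := by
  have hz : y - P k y ∈ E k := Submodule.sub_mem _ hy (hPmem k y)
  have h0 : (inner ℂ (y - P k y) (y - P k y) : ℂ) = 0 :=
    (Submodule.mem_orthogonal _ _).1 (hPorth k y) _ hz
  have := inner_self_eq_zero.1 h0
  have : y - P k y = 0 := this
  linear_combination (norm := module) -this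

theorem proj_kill (E : ℕ → Submodule ℂ H)
    (hEorth : ∀ j k, j ≠ k → ∀ x ∈ E j, ∀ y ∈ E k, (inner ℂ x y : ℂ) = 0)
    (P : ℕ → H →L[ℂ] H)
    (hPmem : ∀ k x, P k x ∈ E k) (hPorth : ∀ k x, x - P k x ∈ (E k)ᗮ)
    {j k : ℕ} (hjk : j ≠ k) {y : H} (hy : y ∈ E j) : P k y = 0 := by
  have h1 : (inner ℂ (P k y) y : ℂ) = 0 := by
    have := hEorth k j (Ne.symm hjk) (P k y) (hPmem k y) y hy
    exact this
  have h2 : (inner ℂ (P k y) (y - P k y) : ℂ) = 0 :=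
    (Submodule.mem_orthogonal _ _).1 (hPorth k y) _ (hPmem k y)
  have h3 : (inner ℂ (P k y) (P k y) : ℂ) = 0 := by
    rw [inner_sub_right] at h2
    linear_combination h1 - h2
  exact inner_self_eq_zero.1 h3

end Aux

section Aux2
variable {H : Type*} [NormedAddCommGroup H] [InnerProductSpace ℂ H] [CompleteSpace H]

theorem hasSum_proj (E : ℕ → Submodule ℂ H)
    (hEclosed : ∀ k, IsClosed (E k : Set H))
    (hEorth : ∀ j k, j ≠ k → ∀ x ∈ E j, ∀ y ∈ E k, (inner ℂ x y : ℂ) = 0)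
    (hEdense : (⨆ k, E k : Submodule ℂ H).topologicalClosure = ⊤)
    (P : ℕ → H →L[ℂ] H)
    (hPmem : ∀ k x, P k x ∈ E k)
    (hPorth : ∀ k x, x - P k x ∈ (E k)ᗮ)
    (x : H) : HasSum (fun i => P i x) x := by
  haveI : ∀ i, CompleteSpace (E i) := fun i => (hEclosed i).completeSpace_coe
  have hortho : OrthogonalFamily ℂ (fun i => E i) (fun i => (E i).subtypeₗᵢ) := by
    intro i j hij a b
    exact hEorth i j hij a a.2 b b.2
  have hHS : IsHilbertSum ℂ (fun i => E i) (fun i => (E i).subtypeₗᵢ) :=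
    IsHilbertSum.mkInternal _ hortho (le_of_eq hEdense.symm)
  set f := hHS.linearIsometryEquiv x with hf
  have hsum : HasSum (fun i => ((f i : H))) x := by
    have := hHS.hasSum_linearIsometryEquiv_symm f
    simpa [hf] using this
  have hPf : ∀ j, P j x = f j := by
    intro j
    have h1 : HasSum (fun i => P j ((f i : H))) (P j x) := hsum.mapL (P j)
    have h2 : ∀ i, P j ((f i : H)) = if i = j then (f j : H) else 0 := by
      intro i
      by_cases hij : i = j
      · subst hij
        simp [proj_fix E P hPmem hPorth i (f i).2]
      · simp [hij, proj_kill E hEorth P hPmem hPorth hij (f i).2]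
    rw [show (fun i => P j ((f i : H))) = fun i => if i = j then (f j : H) else 0 from funext h2]
      at h1
    have h3 : HasSum (fun i => if i = j then (f j : H) else 0) (f j : H) := hasSum_ite_eq j _
    exact h1.unique h3
  simpa [hPf] using hsum

end Aux2

/-- Abstract form of the key intermediate inequality (3.26)-type in the
proof of Corollary 3.3 of Li–Lin–Son: if `(u, v)` is a compatible pair normalized so that
`Re⟪u, v⟫ = 1`, then for every `k ≥ 1`,
`(‖v‖²/lam k - 1)(‖v‖²/lam (k+1) - 1) ≥ 1 - ‖u - P 0 u‖² ⬝ ‖v‖²`. -/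
theorem compatible_pair_consecutive_eigenvalue_inequality
    {H : Type*} [NormedAddCommGroup H] [InnerProductSpace ℂ H] [CompleteSpace H]
    (E : ℕ → Submodule ℂ H)
    (hEclosed : ∀ k, IsClosed (E k : Set H))
    (hEorth : ∀ j k, j ≠ k → ∀ x ∈ E j, ∀ y ∈ E k, (inner ℂ x y : ℂ) = 0)
    (hEdense : (⨆ k, E k : Submodule ℂ H).topologicalClosure = ⊤)
    (P : ℕ → H →L[ℂ] H)
    (hPmem : ∀ k x, P k x ∈ E k)
    (hPorth : ∀ k x, x - P k x ∈ (E k)ᗮ)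
    (lam : ℕ → ℝ)
    (hlampos : ∀ k, 1 ≤ k → 0 < lam k)
    (hlammono : ∀ j k, 1 ≤ j → j < k → lam j < lam k)
    (hlamtop : Filter.Tendsto lam Filter.atTop Filter.atTop)
    (u v : H)
    (hcompat0 : P 0 v = 0)
    (hcompat : ∀ k, 1 ≤ k → P k v = ((lam k : ℂ)) • P k u)
    (hnorm : (inner ℂ u v : ℂ).re = 1) :
    ∀ k, 1 ≤ k →
      (‖v‖^2 / lam k - 1) * (‖v‖^2 / lam (k+1) - 1) ≥ 1 - ‖u - P 0 u‖^2 * ‖v‖^2 := by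
  intro k hk
  have hself : ∀ z : H, (inner ℂ z z : ℂ).re = ‖z‖^2 := fun z => by
    rw [← RCLike.re_to_complex]; exact inner_self_eq_norm_sq z
  set w := u - P 0 u with hw
  have hP0u : P 0 (P 0 u) = P 0 u := proj_fix E P hPmem hPorth 0 (hPmem 0 u)
  have hPw0 : P 0 w = 0 := by rw [hw, map_sub, hP0u, sub_self]
  have hPwj : ∀ j, 1 ≤ j → P j w = P j u := by
    intro j hj
    have h0 : P j (P 0 u) = 0 :=
      proj_kill E hEorth P hPmem hPorth (by omega : (0:ℕ) ≠ j) (hPmem 0 u)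
    rw [hw, map_sub, h0, sub_zero]
  have hwv : (inner ℂ w v : ℂ).re = 1 := by
    have h2 : (inner ℂ (P 0 u) (v - P 0 v) : ℂ) = 0 :=
      (Submodule.mem_orthogonal _ _).1 (hPorth 0 v) _ (hPmem 0 u)
    rw [hcompat0, sub_zero] at h2
    rw [hw, inner_sub_left, h2, sub_zero, hnorm]
  have hvw : (inner ℂ v w : ℂ).re = 1 := by
    rw [← inner_conj_symm, Complex.conj_re, hwv]
  set μ := lam k with hμdef
  set ν := lam (k+1) with hνdef
  have hμ : 0 < μ := hlampos k hk
  have hν : 0 < ν := hlampos (k+1) (by omega)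
  have hμν : μ < ν := hlammono k (k+1) hk (by omega)
  set x' := v - (μ:ℂ) • w with hx'
  set y' := v - (ν:ℂ) • w with hy'
  have hx0 : P 0 x' = 0 := by
    rw [hx', map_sub, map_smul, hcompat0, hPw0, smul_zero, sub_zero]
  have hxj : ∀ (c : ℝ) j, 1 ≤ j →
      P j (v - (c:ℂ) • w) = ((lam j - c : ℝ) : ℂ) • P j u := by
    intro c j hj
    rw [map_sub, map_smul, hcompat j hj, hPwj j hj, ← sub_smul]
    push_cast
    ring_nf
  -- Parseval for the inner ℂ product of x' and y'
  have hsum := hasSum_proj E hEclosed hEorth hEdense P hPmem hPorth y'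
  have hs1 : HasSum (fun i => (inner ℂ x' (P i y') : ℂ)) (inner ℂ x' y') :=
    hsum.mapL (innerSL ℂ x')
  have hrepl : ∀ i, (inner ℂ x' (P i y') : ℂ) = inner ℂ (P i x') (P i y') := by
    intro i
    have h := (Submodule.mem_orthogonal _ _).1 (hPorth i x') _ (hPmem i y')
    have h' : (inner ℂ (x' - P i x') (P i y') : ℂ) = 0 := by
      rw [← inner_conj_symm, h, map_zero]
    rw [inner_sub_left] at h'
    linear_combination h'
  rw [show (fun i => (inner ℂ x' (P i y') : ℂ)) = fun i => (inner ℂ (P i x') (P i y') : ℂ)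
      from funext hrepl] at hs1
  have hs2 : HasSum (fun i => (inner ℂ (P i x') (P i y') : ℂ).re) ((inner ℂ x' y' : ℂ).re) := by
    have := RCLike.hasSum_re (𝕜 := ℂ) hs1
    simpa using this
  have hterm : ∀ i, 0 ≤ (inner ℂ (P i x') (P i y') : ℂ).re := by
    intro i
    rcases Nat.eq_zero_or_pos i with h0 | hpos
    · subst h0
      rw [hx0, inner_zero_left]
      simp
    · rw [hx', hy', hxj μ i hpos, hxj ν i hpos, inner_smul_left, inner_smul_right]
      simp only [Complex.conj_ofReal, Complex.mul_re, Complex.ofReal_re, Complex.ofReal_im,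
        zero_mul, sub_zero, mul_zero]
      rw [hself]
      have hsq : (0:ℝ) ≤ ‖P i u‖^2 := sq_nonneg _
      rcases le_or_gt i k with hik | hik
      · have h1 : lam i ≤ μ := by
          rcases eq_or_lt_of_le hik with h | h
          · rw [hμdef, h]
          · exact le_of_lt (hlammono i k hpos h)
        have h2 : lam i ≤ ν := le_of_lt (hlammono i (k+1) hpos (by omega))
        nlinarith [mul_nonneg (mul_nonneg (sub_nonneg.2 h1) (sub_nonneg.2 h2)) hsq]
      · have h1 : ν ≤ lam i := by
          rcases eq_or_lt_of_le (show k + 1 ≤ i by omega) with h | h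
          · rw [hνdef, h]
          · exact le_of_lt (hlammono (k+1) i (by omega) h)
        have h2 : μ ≤ lam i := le_of_lt (lt_of_lt_of_le hμν h1)
        nlinarith [mul_nonneg (mul_nonneg (sub_nonneg.2 h1) (sub_nonneg.2 h2)) hsq]
  have hre0 : 0 ≤ (inner ℂ x' y' : ℂ).re :=
    hasSum_le (fun i => hterm i) hasSum_zero hs2
  have hvv : (inner ℂ v v : ℂ).re = ‖v‖^2 := hself v
  have hww : (inner ℂ w w : ℂ).re = ‖w‖^2 := hself w
  have hexp : (inner ℂ x' y' : ℂ).re = ‖v‖^2 - ν - μ + μ * ν * ‖w‖^2 := by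
    rw [hx', hy']
    simp only [inner_sub_left, inner_sub_right, inner_smul_left, inner_smul_right,
      Complex.conj_ofReal, Complex.sub_re, Complex.add_re, Complex.mul_re,
      Complex.ofReal_re, Complex.ofReal_im]
    rw [show ((inner ℂ v v : ℂ).re) = ‖v‖^2 from hvv, show ((inner ℂ w w : ℂ).re) = ‖w‖^2 from hww]
    rw [show ((inner ℂ v w : ℂ).re) = 1 from hvw, show ((inner ℂ w v : ℂ).re) = 1 from hwv]
    ring
  have key : 0 ≤ ‖v‖^2 - μ - ν + μ * ν * ‖w‖^2 := by
    rw [hexp] at hre0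
    linarith
  rw [ge_iff_le, ← sub_nonneg]
  have heq : (‖v‖^2/μ - 1) * (‖v‖^2/ν - 1) - (1 - ‖w‖^2 * ‖v‖^2)
      = ‖v‖^2 * (‖v‖^2 - μ - ν + μ * ν * ‖w‖^2) / (μ * ν) := by
    field_simp
    ring
  rw [heq]
  exact div_nonneg (mul_nonneg (sq_nonneg _) key) (by positivity)
end

section
/- Let (u, v) be a compatible pair with v ≠ 0. If ‖v‖^2 = λ_1 · Re⟪u, v⟫, then P_k v = 0 for every k ≠ 1 and v ∈ E_1; that is, v is an eigenvector for the lowest positive eigenvalue λ_1. -/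
/-- Abstract form of the equality-case argument in the proof of
Theorem 1.2/Theorem 4.2 of Li–Lin–Son: if `(u, v)` is a compatible pair with `v ≠ 0`
and `‖v‖² = lam 1 ⬝ Re⟪u, v⟫`, then `P k v = 0` for every `k ≠ 1` and `v ∈ E 1`,
i.e. `v` is an eigenvector for the lowest positive eigenvalue `lam 1`. -/
theorem compatible_pair_equality_case_first_eigenspace
    {H : Type*} [NormedAddCommGroup H] [InnerProductSpace ℂ H] [CompleteSpace H]
    (E : ℕ → Submodule ℂ H)
    (hEclosed : ∀ k, IsClosed (E k : Set H))
    (hEorth : ∀ j k, j ≠ k → ∀ x ∈ E j, ∀ y ∈ E k, (inner ℂ x y : ℂ) = 0)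
    (hEdense : (⨆ k, E k : Submodule ℂ H).topologicalClosure = ⊤)
    (P : ℕ → H →L[ℂ] H)
    (hPmem : ∀ k x, P k x ∈ E k)
    (hPorth : ∀ k x, x - P k x ∈ (E k)ᗮ)
    (lam : ℕ → ℝ)
    (hlampos : ∀ k, 1 ≤ k → 0 < lam k)
    (hlammono : ∀ j k, 1 ≤ j → j < k → lam j < lam k)
    (hlamtop : Filter.Tendsto lam Filter.atTop Filter.atTop)
    (u v : H)
    (hcompat0 : P 0 v = 0)
    (hcompat : ∀ k, 1 ≤ k → P k v = ((lam k : ℂ)) • P k u)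
    (hv : v ≠ 0)
    (heq : ‖v‖^2 = lam 1 * (inner ℂ u v : ℂ).re) :
    (∀ k, k ≠ 1 → P k v = 0) ∧ v ∈ E 1 := by
  classical
  -- P k vanishes on E j for j ≠ k
  have hP0 : ∀ j k, j ≠ k → ∀ x ∈ E j, P k x = 0 := by
    intro j k hjk x hx
    have h1 : (inner ℂ (P k x) (x - P k x) : ℂ) = 0 := (hPorth k x) (P k x) (hPmem k x)
    have h2 : (inner ℂ x (P k x) : ℂ) = 0 := hEorth j k hjk x hx (P k x) (hPmem k x)
    have h3 : (inner ℂ (P k x) x : ℂ) = 0 := by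
      rw [← inner_conj_symm, h2, map_zero]
    have : (inner ℂ (P k x) (P k x) : ℂ) = 0 := by
      have := h1
      rw [inner_sub_right, h3] at this
      linear_combination -this
    exact inner_self_eq_zero.mp this
  -- P k is the identity on E k
  have hPid : ∀ k x, x ∈ E k → P k x = x := by
    intro k x hx
    have hmem : x - P k x ∈ E k := (E k).sub_mem hx (hPmem k x)
    have h1 : (inner ℂ (x - P k x) (x - P k x) : ℂ) = 0 := (hPorth k x) _ hmem
    have := inner_self_eq_zero.mp h1
    rw [sub_eq_zero] at this
    exact this.symm
  -- Hilbert sum structure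
  haveI : ∀ k, CompleteSpace (E k) := fun k => (hEclosed k).completeSpace_coe
  have hfam : OrthogonalFamily ℂ (fun k => E k) (fun k => (E k).subtypeₗᵢ) := by
    intro i j hij x y
    exact hEorth i j hij x x.2 y y.2
  have hsum : IsHilbertSum ℂ (fun k => (E k : Type _)) (fun k => (E k).subtypeₗᵢ) :=
    IsHilbertSum.mkInternal _ hfam (by rw [hEdense])
  set f := hsum.linearIsometryEquiv v with hf
  have hs : HasSum (fun k => ((f k : H))) v := by
    have := hsum.hasSum_linearIsometryEquiv_symm f
    simpa [hf] using this
  -- identify P k v with f k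
  have hPv : ∀ k, P k v = (f k : H) := by
    intro k
    have h2 : HasSum (fun i => P k ((f i : H))) (P k v) := hs.mapL (P k)
    have h3 : (fun i => P k ((f i : H))) = fun i => if i = k then ((f k : H)) else 0 := by
      funext i
      by_cases hik : i = k
      · subst hik; simp [hPid _ _ (f i).2]
      · simp [hik, hP0 i k hik _ (f i).2]
    rw [h3] at h2
    exact h2.unique (hasSum_ite_eq k _)
  have hPsum : HasSum (fun k => P k v) v := by
    simpa [← hPv] using hs
  -- the test vector w
  set w : H := ((lam 1 : ℂ)) • u - v with hw
  -- inner products with components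
  have hwk : ∀ k, (inner ℂ w (P k v) : ℂ) = (inner ℂ (P k w) (P k v) : ℂ) := by
    intro k
    have h1 : (inner ℂ (P k v) (w - P k w) : ℂ) = 0 := (hPorth k w) _ (hPmem k v)
    rw [inner_sub_right] at h1
    have h2 : (inner ℂ (P k v) w : ℂ) = inner ℂ (P k v) (P k w) := by linear_combination h1
    calc (inner ℂ w (P k v) : ℂ) = starRingEnd ℂ (inner ℂ (P k v) w) := (inner_conj_symm _ _).symm
      _ = starRingEnd ℂ (inner ℂ (P k v) (P k w)) := by rw [h2]
      _ = inner ℂ (P k w) (P k v) := inner_conj_symm _ _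
  have hterm : ∀ k, 1 ≤ k →
      (inner ℂ w (P k v) : ℂ).re = (lam 1 - lam k) * (lam k * ‖P k u‖^2) := by
    intro k hk
    have hPkw : P k w = (((lam 1 - lam k : ℝ) : ℂ)) • P k u := by
      rw [hw]
      simp only [map_sub, map_smul, hcompat k hk]
      push_cast
      rw [sub_smul]
    rw [hwk k, hPkw, hcompat k hk, inner_smul_left, inner_smul_right,
      inner_self_eq_norm_sq_to_K]
    rw [Complex.conj_ofReal]
    push_cast
    simp [← Complex.ofReal_pow, ← Complex.ofReal_mul]
  -- the total sum is zero
  have hre : HasSum (fun k => (inner ℂ w (P k v) : ℂ).re) ((inner ℂ w v : ℂ).re) :=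
    Complex.hasSum_re (hPsum.mapL (innerSL ℂ w))
  have hwv : (inner ℂ w v : ℂ).re = 0 := by
    have h1 : (inner ℂ v v : ℂ).re = ‖v‖^2 := by
      rw [inner_self_eq_norm_sq_to_K]; norm_cast
    rw [hw, inner_sub_left, inner_smul_left, Complex.conj_ofReal]
    simp only [Complex.sub_re, Complex.mul_re, Complex.ofReal_im, Complex.ofReal_re, h1]
    rw [heq]; ring
  rw [hwv] at hre
  -- nonpositivity of each term
  have hnonpos : ∀ k, (inner ℂ w (P k v) : ℂ).re ≤ 0 := by
    intro k
    rcases Nat.eq_zero_or_pos k with h0 | hk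
    · subst h0; rw [hcompat0]; simp
    · rw [hterm k hk]
      rcases eq_or_lt_of_le (show 1 ≤ k from hk) with h1 | h2
      · rw [← h1]; ring_nf; simp
      · have : lam 1 - lam k < 0 := by
          have := hlammono 1 k le_rfl h2
          linarith
        have hk' : 0 < lam k := hlampos k hk
        have ht : 0 ≤ lam k * ‖P k u‖^2 := mul_nonneg hk'.le (sq_nonneg _)
        nlinarith [ht, this]
  -- each term is zero
  have hzero : ∀ k, (inner ℂ w (P k v) : ℂ).re = 0 := by
    intro k
    have hneg : HasSum (fun k => -(inner ℂ w (P k v) : ℂ).re) 0 := by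
      simpa using hre.neg
    have := le_hasSum hneg k (fun j _ => by simpa using hnonpos j)
    have h2 := hnonpos k
    linarith
  have hkey : ∀ k, k ≠ 1 → P k v = 0 := by
    intro k hk1
    rcases Nat.eq_zero_or_pos k with h0 | hk
    · subst h0; exact hcompat0
    · have h2 : 2 ≤ k := by omega
      have hz := hzero k
      rw [hterm k hk] at hz
      have hlt : lam 1 - lam k < 0 := by
        have := hlammono 1 k le_rfl (by omega)
        linarith
      have hk' : 0 < lam k := hlampos k hk
      have hu0 : ‖P k u‖^2 = 0 := by
        by_contra hne
        have hpos : 0 < ‖P k u‖^2 := lt_of_le_of_ne (sq_nonneg _) (Ne.symm hne)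
        have ht : 0 < lam k * ‖P k u‖^2 := mul_pos hk' hpos
        have := mul_neg_of_neg_of_pos hlt ht
        linarith
      have : P k u = 0 := by
        have := sq_eq_zero_iff.mp hu0
        exact norm_eq_zero.mp this
      rw [hcompat k hk, this, smul_zero]
  refine ⟨hkey, ?_⟩
  -- v = P 1 v ∈ E 1
  have h3 : (fun k => P k v) = fun k => if k = 1 then P 1 v else 0 := by
    funext k
    by_cases hk : k = 1
    · subst hk; simp
    · simp [hk, hkey k hk]
  rw [h3] at hPsum
  have := hPsum.unique (hasSum_ite_eq 1 (P 1 v))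
  rw [this]
  exact hPmem 1 v
end

section
/- Let n ≥ 1, let H be an (n+1) × (n+1) complex Hermitian positive-definite matrix (indices 1, …, n+1) and let r ∈ ℂ^{n+1} be a vector with r_{n+1} ≠ 0. Let G = H⁻¹, and define ρ^{j k̄} := G_{k j}, ρ^j := Σ_{k=1}^{n+1} conj(r_k) · ρ^{j k̄}, and |∂r|^2 := Σ_{j,k=1}^{n+1} ρ^{j k̄} · r_j · conj(r_k) (a positive real number since H is positive definite and r ≠ 0). For α, β ∈ {1, …, n} define the Levi matrix L_{α β} := H_{α β} − r_α · H_{(n+1) β} / r_{n+1} − conj(r_β) · H_{α (n+1)} / conj(r_{n+1}) + H_{(n+1)(n+1)} · r_α · conj(r_β) / |r_{n+1}|^2, and define K_{γ β} := ρ^{γ β̄} − ρ^γ · conj(ρ^β) / |∂r|^2, where ρ^{γ β̄} = G_{β γ}. Then Σ_{β=1}^n K_{γ β} · L_{α β} = δ_{γ α} for all α, γ ∈ {1, …, n}; that is, [K] is the inverse of the Levi matrix [L] in the Hermitian pairing. -/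
open ComplexOrder Matrix

set_option maxHeartbeats 1000000 in
/-- The algebraic identity verified in Section 2 of Li–Lin–Son:
for a positive definite Hermitian `(n+1) × (n+1)` matrix `Hm` (the complex Hessian
`[ρ_{j k̄}]`) and a vector `r` (the gradient `(ρ_1, …, ρ_{n+1})`) with `r_{n+1} ≠ 0`,
the matrix `K_{γ β} = ρ^{γ β̄} - ρ^γ conj(ρ^β)/|∂r|²` is the inverse of the Levi matrix
`L_{α β}` in the Hermitian pairing: `Σ_β K_{γ β} L_{α β} = δ_{γ α}`. -/
theorem levi_matrix_inverse_formula
    {n : ℕ} (hn : 1 ≤ n)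
    (Hm : Matrix (Fin (n+1)) (Fin (n+1)) ℂ)
    (hHherm : Hm.IsHermitian) (hHpd : Hm.PosDef)
    (r : Fin (n+1) → ℂ) (hr : r (Fin.last n) ≠ 0)
    (G : Matrix (Fin (n+1)) (Fin (n+1)) ℂ) (hG : G = Hm⁻¹)
    (ρup : Fin (n+1) → Fin (n+1) → ℂ) (hρup : ∀ j k, ρup j k = G k j)
    (ρv : Fin (n+1) → ℂ)
    (hρv : ∀ j, ρv j = ∑ k, (starRingEnd ℂ) (r k) * ρup j k)
    (nr : ℂ)
    (hnr : nr = ∑ j, ∑ k, ρup j k * r j * (starRingEnd ℂ) (r k))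
    (L : Matrix (Fin n) (Fin n) ℂ)
    (hL : ∀ α β, L α β = Hm α.castSucc β.castSucc
        - r α.castSucc * Hm (Fin.last n) β.castSucc / r (Fin.last n)
        - (starRingEnd ℂ) (r β.castSucc) * Hm α.castSucc (Fin.last n)
            / (starRingEnd ℂ) (r (Fin.last n))
        + Hm (Fin.last n) (Fin.last n) * r α.castSucc * (starRingEnd ℂ) (r β.castSucc)
            / (Complex.normSq (r (Fin.last n)) : ℂ))
    (K : Matrix (Fin n) (Fin n) ℂ)
    (hK : ∀ γ β, K γ β = ρup γ.castSucc β.castSucc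
        - ρv γ.castSucc * (starRingEnd ℂ) (ρv β.castSucc) / nr) :
    ∀ α γ : Fin n, ∑ β, K γ β * L α β = if γ = α then 1 else 0 := by
  intro α γ
  have hdet : IsUnit Hm := hHpd.isUnit
  have hGH : G * Hm = 1 := by rw [hG]; exact Matrix.nonsing_inv_mul Hm (Matrix.isUnit_iff_isUnit_det Hm |>.1 hdet)
  have hHG : Hm * G = 1 := by rw [hG]; exact Matrix.mul_nonsing_inv Hm (Matrix.isUnit_iff_isUnit_det Hm |>.1 hdet)
  have hGherm : G.IsHermitian := hG ▸ hHherm.inv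
  have hGpd : G.PosDef := hG ▸ hHpd.inv
  set N := Fin.last n with hN
  set c := starRingEnd ℂ with hc
  have hrc : c (r N) ≠ 0 := by simpa using hr
  have hns : (Complex.normSq (r N) : ℂ) ≠ 0 := by
    simpa [Complex.normSq_eq_zero] using hr
  -- nr is nonzero
  have hr0 : r ≠ 0 := fun h => hr (by simp [h])
  have hnrval : nr = star r ⬝ᵥ (G *ᵥ r) := by
    rw [hnr]
    rw [Finset.sum_comm]
    simp only [dotProduct, Matrix.mulVec, dotProduct, hρup,
      Pi.star_apply, Finset.mul_sum]
    refine Finset.sum_congr rfl fun k _ => Finset.sum_congr rfl fun j _ => ?_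
    simp [hc]; ring
  have hnr0 : nr ≠ 0 := by
    rw [hnrval]
    exact (hGpd.dotProduct_mulVec_pos hr0).ne'
  -- entrywise inverse identities
  have hGHe : ∀ k j, ∑ m, G k m * Hm m j = if k = j then 1 else 0 := by
    intro k j
    have := congrArg (fun M => M k j) hGH
    simpa [Matrix.mul_apply, Matrix.one_apply] using this
  have hHGe : ∀ k j, ∑ m, Hm k m * G m j = if k = j then 1 else 0 := by
    intro k j
    have := congrArg (fun M => M k j) hHG
    simpa [Matrix.mul_apply, Matrix.one_apply] using this
  have hGsym : ∀ j k, G j k = c (G k j) := fun j k => by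
    rw [hc, starRingEnd_apply]; exact (hGherm.apply j k).symm
  have hHsym : ∀ j k, Hm j k = c (Hm k j) := fun j k => by
    rw [hc, starRingEnd_apply]; exact (hHherm.apply j k).symm
  set α' := α.castSucc with hα'
  set γ' := γ.castSucc with hγ'
  set Lt : Fin (n+1) → ℂ := fun j => Hm α' j - r α' * Hm N j / r N
      - c (r j) * Hm α' N / c (r N)
      + Hm N N * r α' * c (r j) / (Complex.normSq (r N) : ℂ) with hLt
  set Kt : Fin (n+1) → ℂ := fun j => G j γ' - ρv γ' * c (ρv j) / nr with hKt
  have hLtN : Lt N = 0 := by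
    simp only [hLt]
    rw [Complex.normSq_eq_conj_mul_self]
    field_simp
    rw [mul_div_cancel_right₀ _ hrc]
    ring
  have step1 : ∑ β, K γ β * L α β = ∑ j, Kt j * Lt j := by
    rw [Fin.sum_univ_castSucc, hLtN, mul_zero, add_zero]
    refine Finset.sum_congr rfl fun β _ => ?_
    rw [hK, hL, hρup]
  rw [step1]
  -- the vector (G *ᵥ r)
  have hcρv : ∀ j, c (ρv j) = ∑ k, G j k * r k := by
    intro j
    rw [hρv]
    rw [map_sum]
    refine Finset.sum_congr rfl fun k _ => ?_
    rw [hρup, _root_.map_mul, ← hGsym]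
    simp only [hc, Complex.conj_conj]
    ring
  -- A-sums
  have hA1 : ∑ j, G j γ' * Hm α' j = if γ = α then 1 else 0 := by
    have : ∑ j, G j γ' * Hm α' j = c (∑ j, G γ' j * Hm j α') := by
      rw [map_sum]
      refine Finset.sum_congr rfl fun j _ => ?_
      rw [hGsym j γ', hHsym α' j]
      simp [hc]
    rw [this, hGHe γ' α']
    have : (γ' = α') ↔ (γ = α) := Fin.castSucc_inj
    by_cases h : γ = α <;> simp [h, this]
  have hA2 : ∑ j, G j γ' * Hm N j = 0 := by
    have : ∑ j, G j γ' * Hm N j = c (∑ j, G γ' j * Hm j N) := by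
      rw [map_sum]
      refine Finset.sum_congr rfl fun j _ => ?_
      rw [hGsym j γ', hHsym N j]
      simp [hc]
    rw [this, hGHe γ' N]
    have : γ' ≠ N := Fin.castSucc_lt_last γ |>.ne
    simp [this]
  have hA3 : ∑ j, G j γ' * c (r j) = ρv γ' := by
    rw [hρv]
    refine Finset.sum_congr rfl fun k _ => ?_
    rw [hρup]; ring
  -- B-sums
  have hB1 : ∑ j, c (ρv j) * Hm α' j = r α' := by
    have : ∑ j, c (ρv j) * Hm α' j = ∑ j, ∑ k, Hm α' j * G j k * r k := by
      refine Finset.sum_congr rfl fun j _ => ?_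
      rw [hcρv, Finset.sum_mul]
      refine Finset.sum_congr rfl fun k _ => by ring
    rw [this, Finset.sum_comm]
    have : ∀ k, ∑ j, Hm α' j * G j k * r k = (if α' = k then 1 else 0) * r k := by
      intro k
      rw [← Finset.sum_mul, hHGe α' k]
    simp only [this]
    simp [Finset.sum_ite_eq]
  have hB2 : ∑ j, c (ρv j) * Hm N j = r N := by
    have : ∑ j, c (ρv j) * Hm N j = ∑ j, ∑ k, Hm N j * G j k * r k := by
      refine Finset.sum_congr rfl fun j _ => ?_
      rw [hcρv, Finset.sum_mul]
      refine Finset.sum_congr rfl fun k _ => by ring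
    rw [this, Finset.sum_comm]
    have : ∀ k, ∑ j, Hm N j * G j k * r k = (if N = k then 1 else 0) * r k := by
      intro k
      rw [← Finset.sum_mul, hHGe N k]
    simp only [this]
    simp [Finset.sum_ite_eq]
  have hB3 : ∑ j, c (ρv j) * c (r j) = nr := by
    rw [hnrval]
    simp only [dotProduct, Matrix.mulVec, Pi.star_apply]
    refine Finset.sum_congr rfl fun j _ => ?_
    rw [hcρv, hc, starRingEnd_apply, mul_comm]
  calc ∑ j, Kt j * Lt j
      = ∑ j, ((G j γ' * Hm α' j) - (r α' / r N) * (G j γ' * Hm N j)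
        - (Hm α' N / c (r N)) * (G j γ' * c (r j))
        + (Hm N N * r α' / (Complex.normSq (r N) : ℂ)) * (G j γ' * c (r j))
        - (ρv γ' / nr) * (c (ρv j) * Hm α' j)
        + (ρv γ' / nr) * ((r α' / r N) * (c (ρv j) * Hm N j))
        + (ρv γ' / nr) * ((Hm α' N / c (r N)) * (c (ρv j) * c (r j)))
        - (ρv γ' / nr) * ((Hm N N * r α' / (Complex.normSq (r N) : ℂ)) * (c (ρv j) * c (r j)))) := by
          refine Finset.sum_congr rfl fun j _ => ?_
          simp only [hKt, hLt]
          ring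
    _ = if γ = α then 1 else 0 := by
          have S : ∀ (g : Fin (n+1) → ℂ) (coef : ℂ),
              ∑ j, coef * g j = coef * ∑ j, g j := fun g coef => (Finset.mul_sum _ _ _).symm
          rw [Finset.sum_sub_distrib, Finset.sum_add_distrib, Finset.sum_add_distrib,
            Finset.sum_sub_distrib, Finset.sum_add_distrib, Finset.sum_sub_distrib,
            Finset.sum_sub_distrib, S, S, S, S, S, S, S, S, S, S]
          rw [hA1, hA2, hA3, hB1, hB2, hB3]
          clear_value N c α' γ' Lt Kt
          split_ifs with h <;> field_simp <;> ring
end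

section
/- Let U ⊆ ℂ^{n+1} be open and let ρ : U → ℝ and f : U → ℂ be twice continuously differentiable (C²) on U. For 1 ≤ p, q ≤ n+1 define the first-order operators X_{pq} g := ρ_q · ∂_p g − ρ_p · ∂_q g and X_{p̄ q̄} g := ρ_{q̄} · ∂_{p̄} g − ρ_{p̄} · ∂_{q̄} g (acting on C¹ functions g on U). Fix z ∈ U at which the Hermitian matrix H(z) = [ρ_{j k̄}(z)] is invertible and |∂ρ(z)|_ρ^2 ≠ 0. Then at the point z: Σ_{p,q,j,k=1}^{n+1} ρ^{p k̄} · ρ^{q j̄} · X_{pq}(X_{j̄ k̄} f) = 2 · Σ_{j,k=1}^{n+1} ( ρ^k · ρ^{j̄} − |∂ρ|_ρ^2 · ρ^{k j̄} ) · ∂_k ∂_{j̄} f + 2n · Σ_{j=1}^{n+1} ρ^{j̄} · ∂_{j̄} f. -/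
/-- The Wirtinger derivative `∂_j g(z) = (1/2)(Dg(z)(e_j) - i·Dg(z)(i·e_j))` of a
real-differentiable function `g : ℂ^m → ℂ`, where `D` is the real Fréchet derivative
and `e_j` the `j`-th standard basis vector. -/
noncomputable def wirtingerDeriv {m : ℕ} (g : (Fin m → ℂ) → ℂ) (j : Fin m)
    (z : Fin m → ℂ) : ℂ :=
  (1/2) * (fderiv ℝ g z (Pi.single j 1) - Complex.I * fderiv ℝ g z (Pi.single j Complex.I))

/-- The conjugate Wirtinger derivative `∂_j̄ g(z) = (1/2)(Dg(z)(e_j) + i·Dg(z)(i·e_j))`. -/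
noncomputable def wirtingerDerivBar {m : ℕ} (g : (Fin m → ℂ) → ℂ) (j : Fin m)
    (z : Fin m → ℂ) : ℂ :=
  (1/2) * (fderiv ℝ g z (Pi.single j 1) + Complex.I * fderiv ℝ g z (Pi.single j Complex.I))



lemma wirtingerDeriv_mul {m : ℕ} {g h : (Fin m → ℂ) → ℂ} {z : Fin m → ℂ}
    (hg : DifferentiableAt ℝ g z) (hh : DifferentiableAt ℝ h z) (j : Fin m) :
    wirtingerDeriv (fun w => g w * h w) j z
      = g z * wirtingerDeriv h j z + h z * wirtingerDeriv g j z := by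
  simp only [wirtingerDeriv, fderiv_fun_mul hg hh, ContinuousLinearMap.add_apply,
    ContinuousLinearMap.smul_apply, smul_eq_mul]
  ring

lemma wirtingerDeriv_sub {m : ℕ} {g h : (Fin m → ℂ) → ℂ} {z : Fin m → ℂ}
    (hg : DifferentiableAt ℝ g z) (hh : DifferentiableAt ℝ h z) (j : Fin m) :
    wirtingerDeriv (fun w => g w - h w) j z = wirtingerDeriv g j z - wirtingerDeriv h j z := by
  simp only [wirtingerDeriv, fderiv_fun_sub hg hh, ContinuousLinearMap.sub_apply]
  ring

lemma diffAt_fderivApply {m : ℕ} {U : Set (Fin m → ℂ)} (hU : IsOpen U)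
    {g : (Fin m → ℂ) → ℂ} (hg : ContDiffOn ℝ 2 g U) {z : Fin m → ℂ} (hz : z ∈ U) :
    DifferentiableAt ℝ (fun w => fderiv ℝ g w) z := by
  have h1 : ContDiffOn ℝ 1 (fderiv ℝ g) U := hg.fderiv_of_isOpen hU (by norm_num)
  exact (h1.differentiableOn one_ne_zero).differentiableAt (hU.mem_nhds hz)

lemma diffAt_wirtingerDerivBar {m : ℕ} {U : Set (Fin m → ℂ)} (hU : IsOpen U)
    {g : (Fin m → ℂ) → ℂ} (hg : ContDiffOn ℝ 2 g U) {z : Fin m → ℂ} (hz : z ∈ U) (j : Fin m) :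
    DifferentiableAt ℝ (fun w => wirtingerDerivBar g j w) z := by
  have hφ := diffAt_fderivApply hU hg hz
  have h1 : DifferentiableAt ℝ (fun w => fderiv ℝ g w (Pi.single j 1)) z :=
    hφ.clm_apply (differentiableAt_const _)
  have h2 : DifferentiableAt ℝ (fun w => fderiv ℝ g w (Pi.single j Complex.I)) z :=
    hφ.clm_apply (differentiableAt_const _)
  exact (h1.add (h2.const_mul Complex.I)).const_mul _


lemma diffAt_fderivApply' {m : ℕ} {U : Set (Fin m → ℂ)} (hU : IsOpen U)
    {g : (Fin m → ℂ) → ℂ} (hg : ContDiffOn ℝ 2 g U) {z : Fin m → ℂ} (hz : z ∈ U) :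
    DifferentiableAt ℝ (fun w => fderiv ℝ g w) z := by
  have h1 : ContDiffOn ℝ 1 (fderiv ℝ g) U := hg.fderiv_of_isOpen hU (by norm_num)
  exact (h1.differentiableOn one_ne_zero).differentiableAt (hU.mem_nhds hz)

lemma fderiv_realify {m : ℕ} {U : Set (Fin m → ℂ)} (hU : IsOpen U)
    {ρ : (Fin m → ℂ) → ℝ} (hρ2 : ContDiffOn ℝ 2 ρ U)
    {ρC : (Fin m → ℂ) → ℂ} (hρC : ∀ w, ρC w = ((ρ w : ℝ) : ℂ))
    {w : Fin m → ℂ} (hw : w ∈ U) :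
    fderiv ℝ ρC w = Complex.ofRealCLM.comp (fderiv ℝ ρ w) := by
  have hρd : DifferentiableAt ℝ ρ w :=
    (hρ2.differentiableOn (by norm_num)).differentiableAt (hU.mem_nhds hw)
  have h := Complex.ofRealCLM.hasFDerivAt.comp w hρd.hasFDerivAt
  have h2 : HasFDerivAt ρC (Complex.ofRealCLM.comp (fderiv ℝ ρ w)) w :=
    h.congr_of_eventuallyEq (Filter.Eventually.of_forall fun y => by
      simp [hρC, Function.comp])
  exact h2.fderiv

lemma conj_wirtingerDerivBar_real {m : ℕ} {U : Set (Fin m → ℂ)} (hU : IsOpen U)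
    {ρ : (Fin m → ℂ) → ℝ} (hρ2 : ContDiffOn ℝ 2 ρ U)
    {ρC : (Fin m → ℂ) → ℂ} (hρC : ∀ w, ρC w = ((ρ w : ℝ) : ℂ))
    {z : Fin m → ℂ} (hz : z ∈ U) (k : Fin m) :
    (starRingEnd ℂ) (wirtingerDerivBar ρC k z) = wirtingerDeriv ρC k z := by
  have hre : ∀ x, (starRingEnd ℂ) (fderiv ℝ ρC z x) = fderiv ℝ ρC z x := by
    intro x
    rw [fderiv_realify hU hρ2 hρC hz]
    simp [Complex.conj_ofReal]
  simp only [wirtingerDeriv, wirtingerDerivBar, map_mul, map_add, map_sub, map_one,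
    map_div₀, map_ofNat, Complex.conj_I, hre]
  ring

lemma hermitian_second {m : ℕ} {U : Set (Fin m → ℂ)} (hU : IsOpen U)
    {ρ : (Fin m → ℂ) → ℝ} (hρ2 : ContDiffOn ℝ 2 ρ U)
    {ρC : (Fin m → ℂ) → ℂ} (hρC : ∀ w, ρC w = ((ρ w : ℝ) : ℂ))
    {z : Fin m → ℂ} (hz : z ∈ U) (j k : Fin m) :
    (starRingEnd ℂ) (wirtingerDeriv (fun w => wirtingerDerivBar ρC k w) j z)
      = wirtingerDeriv (fun w => wirtingerDerivBar ρC j w) k z := by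
  have hρCC2 : ContDiffOn ℝ 2 ρC U := by
    have h := Complex.ofRealCLM.contDiff.comp_contDiffOn hρ2
    exact h.congr fun w _ => by simp [hρC, Function.comp]
  have hφdiff : DifferentiableAt ℝ (fun w => fderiv ℝ ρC w) z :=
    diffAt_fderivApply' hU hρCC2 hz
  set B := fderiv ℝ (fun w => fderiv ℝ ρC w) z with hBdef
  have hB : HasFDerivAt (fun w => fderiv ℝ ρC w) B z := hφdiff.hasFDerivAt
  have hev : ∀ᶠ w in nhds z, HasFDerivAt ρC (fderiv ℝ ρC w) w := by
    filter_upwards [hU.mem_nhds hz] with w hw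
    exact ((hρCC2.differentiableOn (by norm_num)).differentiableAt
      (hU.mem_nhds hw)).hasFDerivAt
  have hsymm : ∀ v w, B v w = B w v := second_derivative_symmetric_of_eventually hev hB
  -- realness of B
  have hψ : DifferentiableAt ℝ (fun w => fderiv ℝ ρ w) z := by
    have h1 : ContDiffOn ℝ 1 (fderiv ℝ ρ) U := hρ2.fderiv_of_isOpen hU (by norm_num)
    exact (h1.differentiableOn one_ne_zero).differentiableAt (hU.mem_nhds hz)
  set L := (ContinuousLinearMap.compL ℝ (Fin m → ℂ) ℝ ℂ) Complex.ofRealCLM with hLdef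
  have hLψ : HasFDerivAt (fun w => L (fderiv ℝ ρ w))
      (L.comp (fderiv ℝ (fun w => fderiv ℝ ρ w) z)) z :=
    L.hasFDerivAt.comp z hψ.hasFDerivAt
  have hφ' : HasFDerivAt (fun w => fderiv ℝ ρC w)
      (L.comp (fderiv ℝ (fun w => fderiv ℝ ρ w) z)) z := by
    refine hLψ.congr_of_eventuallyEq ?_
    filter_upwards [hU.mem_nhds hz] with w hw
    rw [fderiv_realify hU hρ2 hρC hw]
    simp [hLdef]
  have hBeq : B = L.comp (fderiv ℝ (fun w => fderiv ℝ ρ w) z) := by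
    rw [hBdef]; exact hφ'.fderiv
  have hreal : ∀ x y, (starRingEnd ℂ) (B x y) = B x y := by
    intro x y
    rw [hBeq]
    simp [hLdef, Complex.conj_ofReal]
  -- fderiv of wirtingerDerivBar in terms of B
  have hfd : ∀ (a : Fin m) (x : Fin m → ℂ),
      fderiv ℝ (fun w => wirtingerDerivBar ρC a w) z x
        = (1/2 : ℂ) * (B x (Pi.single a 1) + Complex.I * B x (Pi.single a Complex.I)) := by
    intro a x
    have h1' := (ContinuousLinearMap.apply ℝ ℂ (Pi.single a (1:ℂ))).hasFDerivAt.comp z hB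
    have h1 : HasFDerivAt (fun w => fderiv ℝ ρC w (Pi.single a (1:ℂ)))
        ((ContinuousLinearMap.apply ℝ ℂ (Pi.single a (1:ℂ))).comp B) z := h1'
    have h2' := (ContinuousLinearMap.apply ℝ ℂ (Pi.single a Complex.I)).hasFDerivAt.comp z hB
    have h2 : HasFDerivAt (fun w => fderiv ℝ ρC w (Pi.single a Complex.I))
        ((ContinuousLinearMap.apply ℝ ℂ (Pi.single a Complex.I)).comp B) z := h2'
    have h3 := (h1.add (h2.const_mul Complex.I)).const_mul ((1:ℂ)/2)
    have h4 : (fun w => wirtingerDerivBar ρC a w)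
        = fun w => (1/2 : ℂ) * (fderiv ℝ ρC w (Pi.single a 1)
            + Complex.I * fderiv ℝ ρC w (Pi.single a Complex.I)) := rfl
    simp only [Pi.add_apply] at h3
    rw [h4, h3.fderiv]
    simp [ContinuousLinearMap.smul_apply, ContinuousLinearMap.add_apply,
      ContinuousLinearMap.comp_apply, ContinuousLinearMap.apply_apply, smul_eq_mul]
    ring
  have hform : ∀ (a b : Fin m),
      wirtingerDeriv (fun w => wirtingerDerivBar ρC b w) a z
        = (1/4 : ℂ) * (B (Pi.single a 1) (Pi.single b 1)
            + Complex.I * B (Pi.single a 1) (Pi.single b Complex.I)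
            - Complex.I * B (Pi.single a Complex.I) (Pi.single b 1)
            + B (Pi.single a Complex.I) (Pi.single b Complex.I)) := by
    intro a b
    simp only [wirtingerDeriv, hfd]
    linear_combination (-(1/4 : ℂ) * B (Pi.single a Complex.I) (Pi.single b Complex.I)) *
      Complex.I_sq
  rw [hform j k, hform k j]
  simp only [map_mul, map_add, map_sub, map_one, map_div₀, map_ofNat, Complex.conj_I, hreal]
  linear_combination (1/4 : ℂ) * hsymm (Pi.single j (1:ℂ)) (Pi.single k (1:ℂ))
    + (-(Complex.I)/4) * hsymm (Pi.single j (1:ℂ)) (Pi.single k Complex.I)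
    + (Complex.I/4) * hsymm (Pi.single j Complex.I) (Pi.single k (1:ℂ))
    + (1/4 : ℂ) * hsymm (Pi.single j Complex.I) (Pi.single k Complex.I)

lemma sum4_factor {m : ℕ} (f g : Fin m → Fin m → ℂ) :
    (∑ p, ∑ q, ∑ j, ∑ k, f p k * g q j) = (∑ p, ∑ k, f p k) * (∑ q, ∑ j, g q j) := by
  calc ∑ p, ∑ q, ∑ j, ∑ k, f p k * g q j
      = ∑ p, ∑ q, (∑ k, f p k) * (∑ j, g q j) := by
        refine Finset.sum_congr rfl fun p _ => Finset.sum_congr rfl fun q _ => ?_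
        rw [Finset.sum_comm, Finset.sum_mul_sum]
    _ = ∑ p, (∑ k, f p k) * (∑ q, ∑ j, g q j) := by
        refine Finset.sum_congr rfl fun p _ => ?_
        rw [Finset.mul_sum]
    _ = _ := by rw [Finset.sum_mul]

lemma contraction_alg {m : ℕ} (G H : Matrix (Fin m) (Fin m) ℂ) (hGH : G * H = 1)
    (ρd ρb F : Fin m → ℂ) (A : Fin m → Fin m → ℂ) (ρv c : Fin m → ℂ) (nr : ℂ)
    (hρv : ∀ p, ρv p = ∑ k, ρb k * G k p)
    (hc : ∀ j, c j = ∑ q, G j q * ρd q)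
    (hnr : nr = ∑ j, ∑ k, G k j * ρd j * ρb k) :
    (∑ p, ∑ q, ∑ j, ∑ k, G k p * G j q *
        (ρd q * (H p k * F j + ρb k * A p j - (H p j * F k + ρb j * A p k))
          - ρd p * (H q k * F j + ρb k * A q j - (H q j * F k + ρb j * A q k))))
      = 2 * (∑ j, ∑ k, (ρv k * c j - nr * G j k) * A k j)
        + 2 * ((m : ℂ) - 1) * ∑ j, c j * F j := by
  have hδ : ∀ a b, (∑ p, G a p * H p b) = if a = b then 1 else 0 := by
    intro a b
    have := congrArg (fun M => M a b) hGH
    simpa [Matrix.mul_apply, Matrix.one_apply] using this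
  have hnr' : nr = ∑ a, ∑ b, G a b * ρd b * ρb a := by
    rw [hnr, Finset.sum_comm]
  set S1 : ℂ := ∑ j, c j * F j with hS1
  set SA : ℂ := ∑ j, ∑ k, ρv k * c j * A k j with hSA
  set SG : ℂ := ∑ j, ∑ k, G j k * A k j with hSG
  have hT1 : (∑ p, ∑ q, ∑ j, ∑ k, (G k p * H p k) * (G j q * ρd q * F j))
      = (m : ℂ) * S1 := by
    rw [sum4_factor]
    congr 1
    · rw [Finset.sum_comm]
      have h1 : ∀ k : Fin m, (∑ p, G k p * H p k) = 1 := fun k => by rw [hδ]; simp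
      simp [h1]
    · rw [hS1]
      conv_lhs => rw [Finset.sum_comm]
      refine Finset.sum_congr rfl fun j _ => ?_
      rw [hc, Finset.sum_mul]
  have hT2 : (∑ p, ∑ q, ∑ j, ∑ k, (ρb k * G k p) * ((G j q * ρd q) * A p j)) = SA := by
    have step1 : ∀ p, (∑ q, ∑ j, ∑ k, (ρb k * G k p) * ((G j q * ρd q) * A p j))
        = ∑ j, ∑ q, (G j q * ρd q) * (ρv p * A p j) := by
      intro p
      rw [Finset.sum_comm]
      refine Finset.sum_congr rfl fun j _ => Finset.sum_congr rfl fun q _ => ?_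
      rw [← Finset.sum_mul, ← hρv]
      ring
    calc (∑ p, ∑ q, ∑ j, ∑ k, (ρb k * G k p) * ((G j q * ρd q) * A p j))
        = ∑ p, ∑ j, c j * (ρv p * A p j) := by
          refine Finset.sum_congr rfl fun p _ => ?_
          rw [step1]
          exact Finset.sum_congr rfl fun j _ => by rw [← Finset.sum_mul, ← hc]
      _ = SA := by
          rw [hSA]
          conv_lhs => rw [Finset.sum_comm]
          exact Finset.sum_congr rfl fun j _ => Finset.sum_congr rfl fun p _ => by ring
  have hT3 : (∑ p, ∑ q, ∑ j, ∑ k, (G k p * H p j) * ((G j q * ρd q) * F k)) = S1 := by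
    calc (∑ p, ∑ q, ∑ j, ∑ k, (G k p * H p j) * ((G j q * ρd q) * F k))
        = ∑ q, ∑ j, ∑ k, ∑ p, (G k p * H p j) * ((G j q * ρd q) * F k) := by
          rw [Finset.sum_comm]
          refine Finset.sum_congr rfl fun q _ => ?_
          rw [Finset.sum_comm]
          exact Finset.sum_congr rfl fun j _ => Finset.sum_comm
      _ = ∑ q, ∑ j, (G j q * ρd q) * F j := by
          refine Finset.sum_congr rfl fun q _ => Finset.sum_congr rfl fun j _ => ?_
          have h2 : ∀ k : Fin m, (∑ p, (G k p * H p j) * ((G j q * ρd q) * F k))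
              = (if k = j then 1 else 0) * ((G j q * ρd q) * F k) := by
            intro k; rw [← Finset.sum_mul, hδ]
          simp [h2]
      _ = S1 := by
          rw [hS1]
          conv_lhs => rw [Finset.sum_comm]
          refine Finset.sum_congr rfl fun j _ => ?_
          rw [hc, Finset.sum_mul]
  have hT4 : (∑ p, ∑ q, ∑ j, ∑ k, (G k p * A p k) * (ρb j * (G j q * ρd q)))
      = SG * nr := by
    rw [sum4_factor]
    congr 1
    · rw [hSG]
      conv_lhs => rw [Finset.sum_comm]
    · rw [hnr']
      conv_lhs => rw [Finset.sum_comm]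
      exact Finset.sum_congr rfl fun a _ => Finset.sum_congr rfl fun b _ => by ring
  have hT5 : (∑ p, ∑ q, ∑ j, ∑ k, (G j q * H q k) * ((G k p * ρd p) * F j)) = S1 := by
    calc (∑ p, ∑ q, ∑ j, ∑ k, (G j q * H q k) * ((G k p * ρd p) * F j))
        = ∑ p, ∑ j, ∑ k, ∑ q, (G j q * H q k) * ((G k p * ρd p) * F j) := by
          refine Finset.sum_congr rfl fun p _ => ?_
          rw [Finset.sum_comm]
          exact Finset.sum_congr rfl fun j _ => Finset.sum_comm
      _ = ∑ p, ∑ j, (G j p * ρd p) * F j := by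
          refine Finset.sum_congr rfl fun p _ => Finset.sum_congr rfl fun j _ => ?_
          have h2 : ∀ k : Fin m, (∑ q, (G j q * H q k) * ((G k p * ρd p) * F j))
              = (if j = k then 1 else 0) * ((G k p * ρd p) * F j) := by
            intro k; rw [← Finset.sum_mul, hδ]
          simp [h2]
      _ = S1 := by
          rw [hS1]
          conv_lhs => rw [Finset.sum_comm]
          refine Finset.sum_congr rfl fun j _ => ?_
          rw [hc, Finset.sum_mul]
  have hT6 : (∑ p, ∑ q, ∑ j, ∑ k, (ρb k * G k p * ρd p) * (G j q * A q j))
      = nr * SG := by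
    rw [sum4_factor]
    congr 1
    · rw [hnr']
      conv_lhs => rw [Finset.sum_comm]
      exact Finset.sum_congr rfl fun a _ => Finset.sum_congr rfl fun b _ => by ring
    · rw [hSG]
      conv_lhs => rw [Finset.sum_comm]
  have hT7 : (∑ p, ∑ q, ∑ j, ∑ k, ((G k p * ρd p) * F k) * (G j q * H q j))
      = S1 * (m : ℂ) := by
    rw [sum4_factor]
    congr 1
    · rw [hS1]
      conv_lhs => rw [Finset.sum_comm]
      refine Finset.sum_congr rfl fun k _ => ?_
      rw [hc, Finset.sum_mul]
    · rw [Finset.sum_comm]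
      have h1 : ∀ j : Fin m, (∑ q, G j q * H q j) = 1 := fun j => by rw [hδ]; simp
      simp [h1]
  have hT8 : (∑ p, ∑ q, ∑ j, ∑ k, (ρb j * G j q) * ((G k p * ρd p) * A q k)) = SA := by
    calc (∑ p, ∑ q, ∑ j, ∑ k, (ρb j * G j q) * ((G k p * ρd p) * A q k))
        = ∑ q, ∑ j, ∑ k, ∑ p, (ρb j * G j q) * ((G k p * ρd p) * A q k) := by
          rw [Finset.sum_comm]
          refine Finset.sum_congr rfl fun q _ => ?_
          rw [Finset.sum_comm]
          exact Finset.sum_congr rfl fun j _ => Finset.sum_comm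
      _ = ∑ q, ∑ j, ∑ k, (ρb j * G j q) * (c k * A q k) := by
          refine Finset.sum_congr rfl fun q _ => Finset.sum_congr rfl fun j _ =>
            Finset.sum_congr rfl fun k _ => ?_
          rw [← Finset.mul_sum, hc, Finset.sum_mul]
      _ = ∑ q, ∑ k, ρv q * (c k * A q k) := by
          refine Finset.sum_congr rfl fun q _ => ?_
          rw [Finset.sum_comm]
          refine Finset.sum_congr rfl fun k _ => ?_
          rw [← Finset.sum_mul, ← hρv]
      _ = SA := by
          rw [hSA]
          conv_lhs => rw [Finset.sum_comm]
          exact Finset.sum_congr rfl fun j _ => Finset.sum_congr rfl fun q _ => by ring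
  have hsplit : (∑ p, ∑ q, ∑ j, ∑ k, G k p * G j q *
        (ρd q * (H p k * F j + ρb k * A p j - (H p j * F k + ρb j * A p k))
          - ρd p * (H q k * F j + ρb k * A q j - (H q j * F k + ρb j * A q k))))
      = (∑ p, ∑ q, ∑ j, ∑ k, (G k p * H p k) * (G j q * ρd q * F j))
        + (∑ p, ∑ q, ∑ j, ∑ k, (ρb k * G k p) * ((G j q * ρd q) * A p j))
        - (∑ p, ∑ q, ∑ j, ∑ k, (G k p * H p j) * ((G j q * ρd q) * F k))
        - (∑ p, ∑ q, ∑ j, ∑ k, (G k p * A p k) * (ρb j * (G j q * ρd q)))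
        - (∑ p, ∑ q, ∑ j, ∑ k, (G j q * H q k) * ((G k p * ρd p) * F j))
        - (∑ p, ∑ q, ∑ j, ∑ k, (ρb k * G k p * ρd p) * (G j q * A q j))
        + (∑ p, ∑ q, ∑ j, ∑ k, ((G k p * ρd p) * F k) * (G j q * H q j))
        + (∑ p, ∑ q, ∑ j, ∑ k, (ρb j * G j q) * ((G k p * ρd p) * A q k)) := by
    simp only [← Finset.sum_add_distrib, ← Finset.sum_sub_distrib]
    exact Finset.sum_congr rfl fun p _ => Finset.sum_congr rfl fun q _ =>
      Finset.sum_congr rfl fun j _ => Finset.sum_congr rfl fun k _ => by ring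
  have hRHS : (∑ j, ∑ k, (ρv k * c j - nr * G j k) * A k j) = SA - nr * SG := by
    rw [hSA, hSG, Finset.mul_sum, ← Finset.sum_sub_distrib]
    refine Finset.sum_congr rfl fun j _ => ?_
    rw [Finset.mul_sum, ← Finset.sum_sub_distrib]
    exact Finset.sum_congr rfl fun k _ => by ring
  rw [hsplit, hT1, hT2, hT3, hT4, hT5, hT6, hT7, hT8, hRHS]
  ring

/-- The contraction identity in Proposition 2.1 of Li–Lin–Son relating
the two local expressions for the Kohn-Laplacian: for `ρ : U → ℝ` and `f : U → ℂ` of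
class `C²` on an open set `U ⊆ ℂ^{n+1}`, at a point `z ∈ U` where the complex Hessian
`H = [ρ_{j k̄}]` is invertible and `|∂ρ|_ρ² ≠ 0`,
`Σ_{p,q,j,k} ρ^{p k̄} ρ^{q j̄} X_{pq}(X_{j̄ k̄} f)
  = 2 Σ_{j,k} (ρ^k ρ^{j̄} - |∂ρ|_ρ² ρ^{k j̄}) ∂_k ∂_{j̄} f + 2n Σ_j ρ^{j̄} ∂_{j̄} f`,
where `X_{pq} g = ρ_q ∂_p g - ρ_p ∂_q g` and `X_{j̄ k̄} g = ρ_{k̄} ∂_{j̄} g - ρ_{j̄} ∂_{k̄} g`. -/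
theorem kohn_laplacian_contraction_identity
    {n : ℕ} (U : Set (Fin (n+1) → ℂ)) (hU : IsOpen U)
    (ρ : (Fin (n+1) → ℂ) → ℝ) (f : (Fin (n+1) → ℂ) → ℂ)
    (hρC2 : ContDiffOn ℝ 2 ρ U) (hfC2 : ContDiffOn ℝ 2 f U)
    (ρC : (Fin (n+1) → ℂ) → ℂ) (hρC : ∀ w, ρC w = ((ρ w : ℝ) : ℂ))
    (z : Fin (n+1) → ℂ) (hz : z ∈ U)
    (Hm : Matrix (Fin (n+1)) (Fin (n+1)) ℂ)
    (hHm : ∀ j k, Hm j k = wirtingerDeriv (fun w => wirtingerDerivBar ρC k w) j z)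
    (hHinv : IsUnit Hm.det)
    (G : Matrix (Fin (n+1)) (Fin (n+1)) ℂ) (hG : G = Hm⁻¹)
    (ρup : Fin (n+1) → Fin (n+1) → ℂ) (hρup : ∀ j k, ρup j k = G k j)
    (ρv : Fin (n+1) → ℂ)
    (hρv : ∀ j, ρv j = ∑ k, wirtingerDerivBar ρC k z * ρup j k)
    (nr : ℂ)
    (hnr : nr = ∑ j, ∑ k, ρup j k * wirtingerDeriv ρC j z * wirtingerDerivBar ρC k z)
    (hnr0 : nr ≠ 0)
    (XB : Fin (n+1) → Fin (n+1) → (Fin (n+1) → ℂ) → ℂ)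
    (hXB : ∀ j k w, XB j k w
      = wirtingerDerivBar ρC k w * wirtingerDerivBar f j w
        - wirtingerDerivBar ρC j w * wirtingerDerivBar f k w) :
    ∑ p, ∑ q, ∑ j, ∑ k, ρup p k * ρup q j *
        (wirtingerDeriv ρC q z * wirtingerDeriv (XB j k) p z
          - wirtingerDeriv ρC p z * wirtingerDeriv (XB j k) q z)
      = 2 * ∑ j, ∑ k, (ρv k * (starRingEnd ℂ) (ρv j) - nr * ρup k j) *
            wirtingerDeriv (fun w => wirtingerDerivBar f j w) k z
        + 2 * n * ∑ j, (starRingEnd ℂ) (ρv j) * wirtingerDerivBar f j z := by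
  have hGH : G * Hm = 1 := by rw [hG]; exact Matrix.nonsing_inv_mul Hm hHinv
  have hconjb : ∀ k, (starRingEnd ℂ) (wirtingerDerivBar ρC k z) = wirtingerDeriv ρC k z :=
    conj_wirtingerDerivBar_real hU hρC2 hρC hz
  have hherm : ∀ j k, (starRingEnd ℂ) (Hm j k) = Hm k j := fun j k => by
    rw [hHm j k, hHm k j]; exact hermitian_second hU hρC2 hρC hz j k
  have hGherm : ∀ j k, (starRingEnd ℂ) (G j k) = G k j := by
    have h1 : Hm.conjTranspose = Hm := Matrix.ext fun a b => by
      simpa [Matrix.conjTranspose_apply] using hherm b a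
    have h2 : G.conjTranspose = G := by
      rw [hG, Matrix.conjTranspose_nonsing_inv, h1]
    intro j k
    have h3 := congrArg (fun M => M k j) h2
    simpa [Matrix.conjTranspose_apply] using h3
  have hc : ∀ j, (starRingEnd ℂ) (ρv j) = ∑ q, G j q * wirtingerDeriv ρC q z := by
    intro j
    rw [hρv j, map_sum]
    refine Finset.sum_congr rfl fun k _ => ?_
    rw [map_mul, hconjb k, hρup j k, hGherm k j]
    ring
  have hρv' : ∀ p, ρv p = ∑ k, wirtingerDerivBar ρC k z * G k p := fun p => by
    rw [hρv p]
    exact Finset.sum_congr rfl fun k _ => by rw [hρup p k]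
  have hnr' : nr = ∑ j, ∑ k, G k j * wirtingerDeriv ρC j z * wirtingerDerivBar ρC k z := by
    rw [hnr]
    exact Finset.sum_congr rfl fun j _ => Finset.sum_congr rfl fun k _ => by rw [hρup j k]
  have hρCC2 : ContDiffOn ℝ 2 ρC U := by
    have h := Complex.ofRealCLM.contDiff.comp_contDiffOn hρC2
    exact h.congr fun w _ => by simp [hρC, Function.comp]
  have dRb : ∀ k, DifferentiableAt ℝ (fun w => wirtingerDerivBar ρC k w) z :=
    fun k => diffAt_wirtingerDerivBar hU hρCC2 hz k
  have dFb : ∀ j, DifferentiableAt ℝ (fun w => wirtingerDerivBar f j w) z :=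
    fun j => diffAt_wirtingerDerivBar hU hfC2 hz j
  have hXBd : ∀ j k p, wirtingerDeriv (XB j k) p z
      = Hm p k * wirtingerDerivBar f j z
        + wirtingerDerivBar ρC k z * wirtingerDeriv (fun w => wirtingerDerivBar f j w) p z
        - (Hm p j * wirtingerDerivBar f k z
          + wirtingerDerivBar ρC j z * wirtingerDeriv (fun w => wirtingerDerivBar f k w) p z) := by
    intro j k p
    have hfun : XB j k = fun w => wirtingerDerivBar ρC k w * wirtingerDerivBar f j w
        - wirtingerDerivBar ρC j w * wirtingerDerivBar f k w := funext fun w => hXB j k w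
    have h1 := wirtingerDeriv_sub
      (g := fun w => wirtingerDerivBar ρC k w * wirtingerDerivBar f j w)
      (h := fun w => wirtingerDerivBar ρC j w * wirtingerDerivBar f k w) ((dRb k).mul (dFb j)) ((dRb j).mul (dFb k)) p
    have h2 := wirtingerDeriv_mul (dRb k) (dFb j) p
    have h3 := wirtingerDeriv_mul (dRb j) (dFb k) p
    rw [hfun, h1, h2, h3, ← hHm p k, ← hHm p j]
    ring
  have hL : (∑ p, ∑ q, ∑ j, ∑ k, ρup p k * ρup q j *
        (wirtingerDeriv ρC q z * wirtingerDeriv (XB j k) p z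
          - wirtingerDeriv ρC p z * wirtingerDeriv (XB j k) q z))
      = ∑ p, ∑ q, ∑ j, ∑ k, G k p * G j q *
          (wirtingerDeriv ρC q z *
            (Hm p k * wirtingerDerivBar f j z
              + wirtingerDerivBar ρC k z *
                wirtingerDeriv (fun w => wirtingerDerivBar f j w) p z
              - (Hm p j * wirtingerDerivBar f k z
                + wirtingerDerivBar ρC j z *
                  wirtingerDeriv (fun w => wirtingerDerivBar f k w) p z))
            - wirtingerDeriv ρC p z *
            (Hm q k * wirtingerDerivBar f j z
              + wirtingerDerivBar ρC k z *
                wirtingerDeriv (fun w => wirtingerDerivBar f j w) q z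
              - (Hm q j * wirtingerDerivBar f k z
                + wirtingerDerivBar ρC j z *
                  wirtingerDeriv (fun w => wirtingerDerivBar f k w) q z))) := by
    refine Finset.sum_congr rfl fun p _ => Finset.sum_congr rfl fun q _ =>
      Finset.sum_congr rfl fun j _ => Finset.sum_congr rfl fun k _ => ?_
    rw [hρup p k, hρup q j, hXBd j k p, hXBd j k q]
  rw [hL]
  rw [contraction_alg G Hm hGH (fun q => wirtingerDeriv ρC q z)
    (fun k => wirtingerDerivBar ρC k z) (fun j => wirtingerDerivBar f j z)
    (fun p j => wirtingerDeriv (fun w => wirtingerDerivBar f j w) p z) ρv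
    (fun j => (starRingEnd ℂ) (ρv j)) nr hρv' hc hnr']
  simp only [hρup]
  push_cast
  ring
end

section
/- Let n ≥ 0, let ν > 0, and let A : {1, …, n+1} → ℝ satisfy 0 ≤ A_j < 1 for all j. Define ρ(z) = Σ_{j=1}^{n+1} |z_j|^2 + Σ_{j=1}^{n+1} A_j · Re(z_j^2) and M_ν = { z ∈ ℂ^{n+1} : ρ(z) = ν }. If there exists a constant c ∈ ℝ such that Σ_{j=1}^{n+1} | conj(z_j) + A_j z_j |^2 = c for every z ∈ M_ν, then A_j = 0 for all j; that is, M_ν is the sphere { z : ‖z‖^2 = ν } of radius √ν centered at 0. -/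
private lemma sum_single_aux {n : ℕ} (j : Fin (n+1)) (f : Fin (n+1) → ℂ → ℝ)
    (h0 : ∀ k, f k 0 = 0) (w : ℂ) :
    ∑ k, f k (if k = j then w else 0) = f j w := by
  rw [Finset.sum_eq_single j]
  · simp
  · intro k _ hk; simp [hk, h0]
  · simp

/-- The rigidity step concluding the proof of Corollary 1.3 of
Li–Lin–Son: for the diagonalized real ellipsoid `ρ(z) = Σ_j |z_j|² + Σ_j A_j Re(z_j²)`
with `0 ≤ A_j < 1` and `ν > 0`, if `Σ_j |conj(z_j) + A_j z_j|²` (which is `|∂ρ|_ρ²`)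
is constant along the level set `M_ν = {z : ρ(z) = ν}`, then `A_j = 0` for all `j`,
that is, `M_ν` is the sphere `{z : ‖z‖² = ν}` of radius `√ν` centered at `0`. -/
theorem ellipsoid_constant_gradient_rigidity
    {n : ℕ} (ν : ℝ) (hν : 0 < ν)
    (A : Fin (n+1) → ℝ) (hA0 : ∀ j, 0 ≤ A j) (hA1 : ∀ j, A j < 1)
    (ρ : (Fin (n+1) → ℂ) → ℝ)
    (hρ : ∀ z, ρ z = ∑ j, Complex.normSq (z j) + ∑ j, A j * ((z j)^2).re)
    (c : ℝ)
    (hc : ∀ z : Fin (n+1) → ℂ, ρ z = ν →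
        ∑ j, Complex.normSq ((starRingEnd ℂ) (z j) + (A j : ℂ) * z j) = c) :
    (∀ j, A j = 0)
    ∧ {z : Fin (n+1) → ℂ | ρ z = ν} = {z : Fin (n+1) → ℂ | ∑ j, Complex.normSq (z j) = ν} := by
  have hAeq : ∀ j, A j = 0 := by
    intro j
    have h1p : (0:ℝ) < 1 + A j := by linarith [hA0 j]
    have h1m : (0:ℝ) < 1 - A j := by linarith [hA1 j]
    -- real direction
    set t : ℝ := Real.sqrt (ν / (1 + A j)) with ht
    have ht2 : t^2 = ν / (1 + A j) := Real.sq_sqrt (le_of_lt (div_pos hν h1p))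
    set z1 : Fin (n+1) → ℂ := fun k => if k = j then (t:ℂ) else 0 with hz1
    have hρ1 : ρ z1 = ν := by
      rw [hρ]
      have e1 : ∑ k, Complex.normSq (z1 k) = t^2 := by
        have := sum_single_aux j (fun _ w => Complex.normSq w) (by simp) (t:ℂ)
        simpa [z1, Complex.normSq_apply, sq] using this
      have e2 : ∑ k, A k * ((z1 k)^2).re = A j * t^2 := by
        have := sum_single_aux j (fun k w => A k * ((w)^2).re) (by simp) (t:ℂ)
        simpa [z1, ← Complex.ofReal_pow] using this
      rw [e1, e2]
      rw [show t^2 + A j * t^2 = t^2 * (1 + A j) by ring, ht2]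
      exact div_mul_cancel₀ ν h1p.ne'
    have hc1 := hc z1 hρ1
    have e3 : ∑ k, Complex.normSq ((starRingEnd ℂ) (z1 k) + (A k : ℂ) * z1 k)
        = (1 + A j)^2 * t^2 := by
      have := sum_single_aux j
        (fun k w => Complex.normSq ((starRingEnd ℂ) w + (A k : ℂ) * w)) (by simp) (t:ℂ)
      rw [show (∑ k, Complex.normSq ((starRingEnd ℂ) (z1 k) + (A k : ℂ) * z1 k))
          = Complex.normSq ((starRingEnd ℂ) (t:ℂ) + (A j : ℂ) * (t:ℂ)) from this]
      rw [Complex.conj_ofReal, ← Complex.ofReal_mul, ← Complex.ofReal_add,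
        Complex.normSq_ofReal]
      ring
    have key1 : (1 + A j)^2 * t^2 = c := by rw [← e3, hc1]
    have key1' : (1 + A j) * ν = c := by
      rw [← key1, ht2]; field_simp
    -- imaginary direction
    set s : ℝ := Real.sqrt (ν / (1 - A j)) with hs
    have hs2 : s^2 = ν / (1 - A j) := Real.sq_sqrt (le_of_lt (div_pos hν h1m))
    set z2 : Fin (n+1) → ℂ := fun k => if k = j then (s:ℂ) * Complex.I else 0 with hz2
    have hρ2 : ρ z2 = ν := by
      rw [hρ]
      have e1 : ∑ k, Complex.normSq (z2 k) = s^2 := by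
        have := sum_single_aux j (fun _ w => Complex.normSq w) (by simp) ((s:ℂ) * Complex.I)
        simpa [z2, Complex.normSq_apply, sq] using this
      have e2 : ∑ k, A k * ((z2 k)^2).re = A j * (-(s^2)) := by
        have := sum_single_aux j (fun k w => A k * ((w)^2).re) (by simp) ((s:ℂ) * Complex.I)
        rw [show (∑ k, A k * ((z2 k)^2).re) = A j * ((((s:ℂ) * Complex.I))^2).re from this]
        have : (((s:ℂ) * Complex.I)^2).re = -(s^2) := by
          rw [mul_pow, Complex.I_sq]
          simp [← Complex.ofReal_pow]
        rw [this]
      rw [e1, e2]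
      rw [show s^2 + A j * -(s^2) = s^2 * (1 - A j) by ring, hs2]
      exact div_mul_cancel₀ ν h1m.ne'
    have hc2 := hc z2 hρ2
    have e3' : ∑ k, Complex.normSq ((starRingEnd ℂ) (z2 k) + (A k : ℂ) * z2 k)
        = (1 - A j)^2 * s^2 := by
      have := sum_single_aux j
        (fun k w => Complex.normSq ((starRingEnd ℂ) w + (A k : ℂ) * w)) (by simp)
        ((s:ℂ) * Complex.I)
      rw [show (∑ k, Complex.normSq ((starRingEnd ℂ) (z2 k) + (A k : ℂ) * z2 k))
          = Complex.normSq ((starRingEnd ℂ) ((s:ℂ) * Complex.I) + (A j : ℂ) * ((s:ℂ) * Complex.I)) from this]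
      have : (starRingEnd ℂ) ((s:ℂ) * Complex.I) + (A j : ℂ) * ((s:ℂ) * Complex.I)
          = ((A j - 1 : ℝ) : ℂ) * ((s:ℂ) * Complex.I) := by
        simp [map_mul, Complex.conj_ofReal, Complex.conj_I]
        ring
      rw [this, Complex.normSq_mul, Complex.normSq_mul, Complex.normSq_ofReal,
        Complex.normSq_ofReal, Complex.normSq_I]
      ring
    have key2 : (1 - A j) * ν = c := by
      rw [← hc2, e3', hs2]; field_simp
    nlinarith [key1', key2]
  refine ⟨hAeq, ?_⟩
  ext z
  simp only [Set.mem_setOf_eq, hρ, hAeq]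
  simp
end
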